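/- arXiv:1506.06320 — 7 statements merged into one kernel-verified Lean document; each statement's English description precedes it below -/
import Mathlib

section
/- With the setup in the context, define ψ1(x) = x^n − |α| x^{n−2} − Σ_{j=0}^{n−3} |v_j| x^j and ψ2(x) = x^{n+1} − |β| x^{n−1} − |γ| x^{n−2} − Σ_{j=0}^{n−3} |w_j| x^j. Suppose r1 > 0 satisfies ψ1(r1) = 0 and r2 > 0 satisfies ψ2(r2) = 0. Then every zero z of p satisfies |z| ≤ max{r1, r2}. -/
open Polynomial Matrix

lemma sum_range_even_odd {M : Type*} [AddCommMonoid M] (m : ℕ) (f : ℕ → M) :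
    ∑ j ∈ Finset.range (2 * m), f j
      = ∑ j ∈ Finset.range m, (f (2 * j) + f (2 * j + 1)) := by
  induction m with
  | zero => simp
  | succ k ih =>
      rw [show 2 * (k + 1) = 2 * k + 1 + 1 by ring, Finset.sum_range_succ,
        Finset.sum_range_succ, ih, Finset.sum_range_succ, add_assoc]


lemma root_pos_after (N : ℕ) (c : ℕ → ℝ) (hc : ∀ k, 0 ≤ c k) (r s : ℝ)
    (hr : 0 < r) (hrs : r < s)
    (h0 : r ^ N = ∑ k ∈ Finset.range N, c k * r ^ k) :
    ∑ k ∈ Finset.range N, c k * s ^ k < s ^ N := by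
  obtain _ | M := N
  · simp at h0
  have hs : 0 < s := hr.trans hrs
  have hrM : (0:ℝ) < r ^ M := pow_pos hr M
  rw [← mul_lt_mul_iff_of_pos_right hrM]
  calc (∑ k ∈ Finset.range (M + 1), c k * s ^ k) * r ^ M
      = ∑ k ∈ Finset.range (M + 1), c k * s ^ k * r ^ M := by rw [Finset.sum_mul]
    _ ≤ ∑ k ∈ Finset.range (M + 1), c k * r ^ k * s ^ M := by
        refine Finset.sum_le_sum fun k hk => ?_
        have hk' : k ≤ M := Nat.lt_succ_iff.mp (Finset.mem_range.mp hk)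
        have h1 : s ^ k * r ^ M ≤ r ^ k * s ^ M := by
          rw [show M = k + (M - k) by omega, pow_add, pow_add]
          have h4 : r ^ (M - k) ≤ s ^ (M - k) := pow_le_pow_left₀ hr.le hrs.le _
          have h2 : (0:ℝ) < s ^ k := pow_pos hs k
          have h3 : (0:ℝ) < r ^ k := pow_pos hr k
          calc s ^ k * (r ^ k * r ^ (M - k)) ≤ s ^ k * (r ^ k * s ^ (M - k)) := by
                exact mul_le_mul_of_nonneg_left (mul_le_mul_of_nonneg_left h4 h3.le) h2.le
            _ = r ^ k * (s ^ k * s ^ (M - k)) := by ring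
        calc c k * s ^ k * r ^ M = c k * (s ^ k * r ^ M) := by ring
          _ ≤ c k * (r ^ k * s ^ M) := mul_le_mul_of_nonneg_left h1 (hc k)
          _ = c k * r ^ k * s ^ M := by ring
    _ = r ^ (M + 1) * s ^ M := by rw [← Finset.sum_mul, ← h0]
    _ < s ^ (M + 1) * r ^ M := by
        have h5 : (0:ℝ) < s ^ M := pow_pos hs M
        calc r ^ (M + 1) * s ^ M = (r ^ M * s ^ M) * r := by ring
          _ < (r ^ M * s ^ M) * s := mul_lt_mul_of_pos_left hrs (mul_pos hrM h5)
          _ = s ^ (M + 1) * r ^ M := by ring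

lemma psi1_pos (K : ℕ) (aα : ℝ) (hα : 0 ≤ aα) (c : ℕ → ℝ) (hc : ∀ k, 0 ≤ c k)
    (r s : ℝ) (hr : 0 < r) (hrs : r < s)
    (hroot : r ^ (K + 2) - aα * r ^ K - ∑ j ∈ Finset.range K, c j * r ^ j = 0) :
    aα * s ^ K + ∑ j ∈ Finset.range K, c j * s ^ j < s ^ (K + 2) := by
  classical
  set cc : ℕ → ℝ := fun k => if k = K then aα else if k < K then c k else 0 with hcc
  have hccnn : ∀ k, 0 ≤ cc k := by
    intro k
    simp only [hcc]
    split_ifs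
    · exact hα
    · exact hc k
    · exact le_refl 0
  have key : ∀ t : ℝ, ∑ k ∈ Finset.range (K + 2), cc k * t ^ k
      = aα * t ^ K + ∑ j ∈ Finset.range K, c j * t ^ j := by
    intro t
    rw [(by omega : K + 2 = (K + 1) + 1), Finset.sum_range_succ, Finset.sum_range_succ]
    have h1 : cc (K + 1) = 0 := by
      simp only [hcc]; rw [if_neg (by omega), if_neg (by omega)]
    have h2 : cc K = aα := by simp [hcc]
    have h3 : ∑ k ∈ Finset.range K, cc k * t ^ k = ∑ j ∈ Finset.range K, c j * t ^ j := by
      refine Finset.sum_congr rfl fun k hk => ?_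
      have hk' := Finset.mem_range.mp hk
      simp only [hcc]; rw [if_neg (by omega), if_pos hk']
    rw [h1, h2, h3]; ring
  have h4 := root_pos_after (K + 2) cc hccnn r s hr hrs (by rw [key]; linarith)
  rw [key] at h4
  linarith

lemma psi2_pos (K : ℕ) (bβ gγ : ℝ) (hβ : 0 ≤ bβ) (hγ : 0 ≤ gγ) (c : ℕ → ℝ)
    (hc : ∀ k, 0 ≤ c k) (r s : ℝ) (hr : 0 < r) (hrs : r < s)
    (hroot : r ^ (K + 3) - bβ * r ^ (K + 1) - gγ * r ^ K
      - ∑ j ∈ Finset.range K, c j * r ^ j = 0) :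
    bβ * s ^ (K + 1) + gγ * s ^ K + ∑ j ∈ Finset.range K, c j * s ^ j < s ^ (K + 3) := by
  classical
  set cc : ℕ → ℝ :=
    fun k => if k = K + 1 then bβ else if k = K then gγ else if k < K then c k else 0 with hcc
  have hccnn : ∀ k, 0 ≤ cc k := by
    intro k
    simp only [hcc]
    split_ifs
    · exact hβ
    · exact hγ
    · exact hc k
    · exact le_refl 0
  have key : ∀ t : ℝ, ∑ k ∈ Finset.range (K + 3), cc k * t ^ k
      = bβ * t ^ (K + 1) + gγ * t ^ K + ∑ j ∈ Finset.range K, c j * t ^ j := by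
    intro t
    rw [(by omega : K + 3 = ((K + 1) + 1) + 1), Finset.sum_range_succ, Finset.sum_range_succ,
      Finset.sum_range_succ]
    have h1 : cc (K + 1 + 1) = 0 := by
      simp only [hcc]; rw [if_neg (by omega), if_neg (by omega), if_neg (by omega)]
    have h2 : cc (K + 1) = bβ := by simp [hcc]
    have h2' : cc K = gγ := by simp [hcc]
    have h3 : ∑ k ∈ Finset.range K, cc k * t ^ k = ∑ j ∈ Finset.range K, c j * t ^ j := by
      refine Finset.sum_congr rfl fun k hk => ?_
      have hk' := Finset.mem_range.mp hk
      simp only [hcc]; rw [if_neg (by omega), if_neg (by omega), if_pos hk']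
    rw [h1, h2, h2', h3]; ring
  have h4 := root_pos_after (K + 3) cc hccnn r s hr hrs (by rw [key]; linarith)
  rw [key] at h4
  linarith

set_option maxHeartbeats 3200000 in
theorem cauchy_like_psi
    (ℓ : ℕ) (hℓ : 3 ≤ ℓ) (b : ℕ → ℂ) (p : Polynomial ℂ)
    (hp : p = X ^ ℓ + ∑ i ∈ Finset.range ℓ, C (b i) * X ^ i)
    (m n : ℕ) (hm : m = (ℓ + 1) / 2) (hn : n = 2 * m)
    (a : ℕ → ℂ)
    (haeven : Even ℓ → ∀ j, j < n → a j = b j)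
    (haodd : ¬ Even ℓ → a 0 = 0 ∧ ∀ j, 1 ≤ j → j < n → a j = b (j - 1))
    (A : ℕ → Matrix (Fin 2) (Fin 2) ℂ)
    (hA0 : A 0 = !![-(a 0), a (n - 1) * a 0; -(a 1), a (n - 1) * a 1 - a 0])
    (hA : ∀ j, 1 ≤ j → j ≤ m - 1 →
      A j = !![-(a (2 * j)), a (n - 1) * a (2 * j) - a (2 * j - 1);
               -(a (2 * j + 1)), a (n - 1) * a (2 * j + 1) - a (2 * j)])
    (S : Matrix (Fin 2) (Fin 2) ℂ) (hS : IsUnit S)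
    (α β γ : ℂ)
    (htri : S⁻¹ * A (m - 1) * S = !![α, γ; 0, β])
    (v w : ℕ → ℂ)
    (hvw : ∀ j, j ≤ m - 2 →
      S⁻¹ * A j * S = !![v (2 * j), w (2 * j); v (2 * j + 1), w (2 * j + 1)])
    (ψ1 ψ2 : ℝ → ℝ)
    (hψ1 : ∀ x : ℝ, ψ1 x = x ^ n - ‖α‖ * x ^ (n - 2)
        - ∑ j ∈ Finset.range (n - 2), ‖v j‖ * x ^ j)
    (hψ2 : ∀ x : ℝ, ψ2 x = x ^ (n + 1) - ‖β‖ * x ^ (n - 1) - ‖γ‖ * x ^ (n - 2)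
        - ∑ j ∈ Finset.range (n - 2), ‖w j‖ * x ^ j)
    (r1 r2 : ℝ) (hr1 : 0 < r1) (hr1' : ψ1 r1 = 0) (hr2 : 0 < r2) (hr2' : ψ2 r2 = 0) :
    ∀ z : ℂ, p.eval z = 0 → ‖z‖ ≤ max r1 r2 := by
  intro z hz
  by_contra hgt
  push_neg at hgt
  have hm2 : 2 ≤ m := by omega
  have hz' : z ^ ℓ + ∑ i ∈ Finset.range ℓ, b i * z ^ i = 0 := by
    rw [hp] at hz
    simpa [Polynomial.eval_finset_sum] using hz
  have hq : z ^ n + ∑ j ∈ Finset.range n, a j * z ^ j = 0 := by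
    by_cases he : Even ℓ
    · obtain ⟨k, hk⟩ := id he
      have hne : n = ℓ := by omega
      have hstep : ∑ j ∈ Finset.range n, a j * z ^ j
          = ∑ i ∈ Finset.range ℓ, b i * z ^ i := by
        rw [hne]
        refine Finset.sum_congr rfl fun j hj => ?_
        have hj' := Finset.mem_range.mp hj
        rw [haeven he j (by omega)]
      rw [hstep, hne]
      exact hz'
    · obtain ⟨k, hk⟩ := Nat.not_even_iff_odd.mp he
      have hnl : n = ℓ + 1 := by omega
      obtain ⟨ha0, haj⟩ := haodd he
      have hsum : ∑ j ∈ Finset.range n, a j * z ^ j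
          = (∑ i ∈ Finset.range ℓ, b i * z ^ i) * z := by
        rw [hnl, Finset.sum_range_succ', ha0, Finset.sum_mul]
        simp only [zero_mul, add_zero]
        refine Finset.sum_congr rfl fun i hi => ?_
        have hi' : i < ℓ := Finset.mem_range.mp hi
        rw [haj (i + 1) (by omega) (by omega)]
        simp only [Nat.add_sub_cancel]
        rw [pow_succ]; ring
      rw [hsum, hnl, pow_succ]
      linear_combination z * hz'

  -- index normalization
  obtain ⟨M, rfl⟩ : ∃ M, m = M + 1 := ⟨m - 1, by omega⟩
  have hM : 1 ≤ M := by omega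
  subst hn
  have e1 : 2 * (M + 1) - 1 = 2 * M + 1 := by omega
  have e2 : 2 * (M + 1) - 2 = 2 * M := by omega
  have e3 : M + 1 - 1 = M := by omega
  rw [e1] at hA0 hA
  rw [e3] at hA htri
  rw [e2] at hψ1 hψ2
  rw [e1] at hψ2
  -- even/odd decomposition
  set x := z ^ 2 with hxdef
  have hxp : ∀ j : ℕ, x ^ j = z ^ (2 * j) := fun j => by rw [hxdef, ← pow_mul]
  set Eo := ∑ j ∈ Finset.range (M + 1), a (2 * j) * x ^ j with hEo
  set Od := ∑ j ∈ Finset.range (M + 1), a (2 * j + 1) * x ^ j with hOd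
  have hEO : z ^ (2 * (M + 1)) + Eo + z * Od = 0 := by
    have h1 : ∑ j ∈ Finset.range (2 * (M + 1)), a j * z ^ j = Eo + z * Od := by
      rw [sum_range_even_odd, Finset.sum_add_distrib, hEo, hOd, Finset.mul_sum]
      congr 1
      · exact Finset.sum_congr rfl fun j _ => by rw [hxp]
      · refine Finset.sum_congr rfl fun j _ => ?_
        rw [hxp, pow_succ]
        ring
    rw [add_assoc, ← h1]
    exact hq
  -- entry lemmas
  have entry00 : ∀ j < M + 1, A j 0 0 = -(a (2 * j)) := by
    intro j hj
    rcases Nat.eq_zero_or_pos j with h | h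
    · subst h; rw [hA0]; norm_num
    · rw [hA j h (by omega)]; simp
  have entry10 : ∀ j < M + 1, A j 1 0 = -(a (2 * j + 1)) := by
    intro j hj
    rcases Nat.eq_zero_or_pos j with h | h
    · subst h; rw [hA0]; norm_num
    · rw [hA j h (by omega)]; simp
  have entry11 : ∀ j < M + 1, A j 1 1 = a (2 * M + 1) * a (2 * j + 1) - a (2 * j) := by
    intro j hj
    rcases Nat.eq_zero_or_pos j with h | h
    · subst h; rw [hA0]; norm_num
    · rw [hA j h (by omega)]; simp
  have entry01 : ∀ j, 1 ≤ j → j < M + 1 →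
      A j 0 1 = a (2 * M + 1) * a (2 * j) - a (2 * j - 1) := by
    intro j h1 h2
    rw [hA j h1 (by omega)]; simp
  have entry010 : A 0 0 1 = a (2 * M + 1) * a 0 := by rw [hA0]; norm_num
  -- sum lemmas
  have L00 : ∑ j ∈ Finset.range (M + 1), x ^ j * A j 0 0 = -Eo := by
    rw [hEo, ← Finset.sum_neg_distrib]
    refine Finset.sum_congr rfl fun j hj => ?_
    rw [entry00 j (Finset.mem_range.mp hj)]; ring
  have L10 : ∑ j ∈ Finset.range (M + 1), x ^ j * A j 1 0 = -Od := by
    rw [hOd, ← Finset.sum_neg_distrib]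
    refine Finset.sum_congr rfl fun j hj => ?_
    rw [entry10 j (Finset.mem_range.mp hj)]; ring
  have L11 : ∑ j ∈ Finset.range (M + 1), x ^ j * A j 1 1
      = a (2 * M + 1) * Od - Eo := by
    rw [hOd, hEo, Finset.mul_sum, ← Finset.sum_sub_distrib]
    refine Finset.sum_congr rfl fun j hj => ?_
    rw [entry11 j (Finset.mem_range.mp hj)]; ring
  have hEo' : Eo = ∑ j ∈ Finset.range M, a (2 * (j + 1)) * x ^ (j + 1) + a 0 := by
    rw [hEo, Finset.sum_range_succ']
    norm_num
  have hOd' : Od = ∑ j ∈ Finset.range M, a (2 * j + 1) * x ^ j + a (2 * M + 1) * x ^ M := by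
    rw [hOd, Finset.sum_range_succ]
  have L01 : ∑ j ∈ Finset.range (M + 1), x ^ j * A j 0 1
      = a (2 * M + 1) * Eo - x * Od + a (2 * M + 1) * x ^ (M + 1) := by
    rw [Finset.sum_range_succ', entry010]
    have key : ∑ j ∈ Finset.range M, x ^ (j + 1) * A (j + 1) 0 1
        = a (2 * M + 1) * (∑ j ∈ Finset.range M, a (2 * (j + 1)) * x ^ (j + 1))
          - x * (∑ j ∈ Finset.range M, a (2 * j + 1) * x ^ j) := by
      rw [Finset.mul_sum, Finset.mul_sum, ← Finset.sum_sub_distrib]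
      refine Finset.sum_congr rfl fun j hj => ?_
      have hj2 := Finset.mem_range.mp hj
      rw [entry01 (j + 1) (by omega) (by omega)]
      rw [show 2 * (j + 1) - 1 = 2 * j + 1 by omega]
      ring
    rw [key, hEo', hOd']
    ring

  -- matrix F and kernel vector
  have hdet : IsUnit S.det := (Matrix.isUnit_iff_isUnit_det S).mp hS
  have hSS : S⁻¹ * S = 1 := Matrix.nonsing_inv_mul S hdet
  have hSS' : S * S⁻¹ = 1 := Matrix.mul_nonsing_inv S hdet
  set F : Matrix (Fin 2) (Fin 2) ℂ :=
    x ^ (M + 1) • (1 : Matrix (Fin 2) (Fin 2) ℂ)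
      - ∑ j ∈ Finset.range (M + 1), x ^ j • A j with hF
  have mulVec2 : ∀ (N : Matrix (Fin 2) (Fin 2) ℂ) (u : Fin 2 → ℂ) (i : Fin 2),
      (N *ᵥ u) i = N i 0 * u 0 + N i 1 * u 1 := by
    intro N u i
    simp [Matrix.mulVec, dotProduct, Fin.sum_univ_two]
  have hFapp : ∀ i k : Fin 2, F i k
      = x ^ (M + 1) * (1 : Matrix (Fin 2) (Fin 2) ℂ) i k
        - ∑ j ∈ Finset.range (M + 1), x ^ j * A j i k := by
    intro i k
    rw [hF]
    simp [Matrix.sub_apply, Matrix.smul_apply, Matrix.sum_apply, smul_eq_mul]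
  have hxm : x ^ (M + 1) = z ^ (2 * (M + 1)) := hxp (M + 1)
  have hFu : F *ᵥ ![z + a (2 * M + 1), 1] = 0 := by
    funext i
    fin_cases i
    · show (F *ᵥ ![z + a (2 * M + 1), 1]) 0 = 0
      rw [mulVec2, hFapp 0 0, hFapp 0 1, L00, L01]
      have h00 : (1 : Matrix (Fin 2) (Fin 2) ℂ) 0 0 = 1 := by simp
      have h01 : (1 : Matrix (Fin 2) (Fin 2) ℂ) 0 1 = 0 := by simp
      have hv0 : (![z + a (2 * M + 1), 1] : Fin 2 → ℂ) 0 = z + a (2 * M + 1) := rfl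
      have hv1 : (![z + a (2 * M + 1), 1] : Fin 2 → ℂ) 1 = 1 := rfl
      rw [h00, h01, hv0, hv1, hxm, hxdef]
      linear_combination z * hEO
    · show (F *ᵥ ![z + a (2 * M + 1), 1]) 1 = 0
      rw [mulVec2, hFapp 1 0, hFapp 1 1, L10, L11]
      have h10 : (1 : Matrix (Fin 2) (Fin 2) ℂ) 1 0 = 0 := by simp
      have h11 : (1 : Matrix (Fin 2) (Fin 2) ℂ) 1 1 = 1 := by simp
      have hv0 : (![z + a (2 * M + 1), 1] : Fin 2 → ℂ) 0 = z + a (2 * M + 1) := rfl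
      have hv1 : (![z + a (2 * M + 1), 1] : Fin 2 → ℂ) 1 = 1 := rfl
      rw [h10, h11, hv0, hv1, hxm]
      linear_combination hEO
  -- conjugation by S
  have hT : S⁻¹ * F * S
      = x ^ (M + 1) • (1 : Matrix (Fin 2) (Fin 2) ℂ) - x ^ M • !![α, γ; 0, β]
        - ∑ j ∈ Finset.range M,
            x ^ j • !![v (2 * j), w (2 * j); v (2 * j + 1), w (2 * j + 1)] := by
    have hstep : S⁻¹ * F * S
        = x ^ (M + 1) • (S⁻¹ * S)
          - ∑ j ∈ Finset.range (M + 1), x ^ j • (S⁻¹ * A j * S) := by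
      rw [hF]
      simp only [Matrix.mul_sub, Matrix.sub_mul, Matrix.mul_smul, Matrix.smul_mul,
        Matrix.mul_sum, Finset.sum_mul, mul_one, mul_assoc]
    rw [hstep, hSS]
    have hsplit : ∑ j ∈ Finset.range (M + 1), x ^ j • (S⁻¹ * A j * S)
        = ∑ j ∈ Finset.range M,
            x ^ j • !![v (2 * j), w (2 * j); v (2 * j + 1), w (2 * j + 1)]
          + x ^ M • !![α, γ; 0, β] := by
      rw [Finset.sum_range_succ, htri]
      congr 1
      refine Finset.sum_congr rfl fun j hj => ?_
      have hj' := Finset.mem_range.mp hj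
      rw [hvw j (by omega)]
    rw [hsplit]
    abel
  set y := S⁻¹ *ᵥ ![z + a (2 * M + 1), 1] with hy
  have hSy : S *ᵥ y = ![z + a (2 * M + 1), 1] := by
    rw [hy, Matrix.mulVec_mulVec, hSS', Matrix.one_mulVec]
  have hynz : ¬(y 0 = 0 ∧ y 1 = 0) := by
    rintro ⟨h0, h1⟩
    have hy0 : y = 0 := by
      funext i; fin_cases i
      · exact h0
      · exact h1
    rw [hy0, Matrix.mulVec_zero] at hSy
    have := congrFun hSy 1
    simp at this
  have hTy : (S⁻¹ * F * S) *ᵥ y = 0 := by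
    rw [hy, Matrix.mulVec_mulVec]
    rw [show S⁻¹ * F * S * S⁻¹ = S⁻¹ * F from by rw [mul_assoc (S⁻¹ * F), hSS', mul_one]]
    rw [← Matrix.mulVec_mulVec, hFu, Matrix.mulVec_zero]
  rw [hT] at hTy
  have eq0 : x ^ (M + 1) * y 0
      = α * (x ^ M * y 0) + γ * (x ^ M * y 1)
        + ∑ j ∈ Finset.range M, x ^ j * (v (2 * j) * y 0 + w (2 * j) * y 1) := by
    have h := congrFun hTy 0
    rw [mulVec2] at h
    simp only [Matrix.sub_apply, Matrix.smul_apply, Matrix.sum_apply, smul_eq_mul,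
      Matrix.one_apply_eq, Matrix.one_apply_ne, Matrix.cons_val_zero, Matrix.cons_val_one,
      Matrix.head_cons, Matrix.cons_val', Matrix.head_fin_const, Matrix.empty_val',
      Matrix.cons_val_fin_one, ne_eq, Fin.zero_eq_one_iff, OfNat.ofNat_ne_one,
      not_false_eq_true, Matrix.of_apply, Pi.zero_apply] at h
    have hc : ∑ j ∈ Finset.range M, x ^ j * (v (2 * j) * y 0 + w (2 * j) * y 1)
        = (∑ j ∈ Finset.range M, x ^ j * v (2 * j)) * y 0
          + (∑ j ∈ Finset.range M, x ^ j * w (2 * j)) * y 1 := by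
      rw [Finset.sum_mul, Finset.sum_mul, ← Finset.sum_add_distrib]
      exact Finset.sum_congr rfl fun j _ => by ring
    rw [hc]
    linear_combination h
  have eq1 : x ^ (M + 1) * y 1
      = β * (x ^ M * y 1)
        + ∑ j ∈ Finset.range M, x ^ j * (v (2 * j + 1) * y 0 + w (2 * j + 1) * y 1) := by
    have h := congrFun hTy 1
    rw [mulVec2] at h
    simp only [Matrix.sub_apply, Matrix.smul_apply, Matrix.sum_apply, smul_eq_mul,
      Matrix.one_apply_eq, Matrix.one_apply_ne, Matrix.cons_val_zero, Matrix.cons_val_one,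
      Matrix.head_cons, Matrix.cons_val', Matrix.head_fin_const, Matrix.empty_val',
      Matrix.cons_val_fin_one, ne_eq, Fin.one_eq_zero_iff, OfNat.ofNat_ne_one,
      not_false_eq_true, Matrix.of_apply, Pi.zero_apply] at h
    have hc : ∑ j ∈ Finset.range M, x ^ j * (v (2 * j + 1) * y 0 + w (2 * j + 1) * y 1)
        = (∑ j ∈ Finset.range M, x ^ j * v (2 * j + 1)) * y 0
          + (∑ j ∈ Finset.range M, x ^ j * w (2 * j + 1)) * y 1 := by
      rw [Finset.sum_mul, Finset.sum_mul, ← Finset.sum_add_distrib]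
      exact Finset.sum_congr rfl fun j _ => by ring
    rw [hc]
    linear_combination h

  -- pass to absolute values
  set s := ‖z‖ with hsdef
  have hr1s : r1 < s := lt_of_le_of_lt (le_max_left r1 r2) hgt
  have hr2s : r2 < s := lt_of_le_of_lt (le_max_right r1 r2) hgt
  have hs0 : 0 < s := hr1.trans hr1s
  set t0 := ‖y 0‖ with ht0def
  set t1 := ‖y 1‖ with ht1def
  have ht0 : 0 ≤ t0 := norm_nonneg _
  have ht1 : 0 ≤ t1 := norm_nonneg _
  have habsx : ∀ j : ℕ, ‖x ^ j‖ = s ^ (2 * j) := fun j => by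
    rw [hxp j, norm_pow, hsdef]
  set Sv0 := ∑ j ∈ Finset.range M, ‖v (2 * j)‖ * s ^ (2 * j) with hSv0
  set Sw0 := ∑ j ∈ Finset.range M, ‖w (2 * j)‖ * s ^ (2 * j) with hSw0
  set Sv1 := ∑ j ∈ Finset.range M, ‖v (2 * j + 1)‖ * s ^ (2 * j + 1) with hSv1
  set Sw1 := ∑ j ∈ Finset.range M, ‖w (2 * j + 1)‖ * s ^ (2 * j + 1) with hSw1
  set Pv := ∑ j ∈ Finset.range M, ‖v (2 * j + 1)‖ * s ^ (2 * j) with hPv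
  set Pw := ∑ j ∈ Finset.range M, ‖w (2 * j + 1)‖ * s ^ (2 * j) with hPw
  have hSv0n : 0 ≤ Sv0 := Finset.sum_nonneg fun j _ =>
    mul_nonneg (norm_nonneg _) (pow_nonneg hs0.le _)
  have hSw0n : 0 ≤ Sw0 := Finset.sum_nonneg fun j _ =>
    mul_nonneg (norm_nonneg _) (pow_nonneg hs0.le _)
  have hSv1n : 0 ≤ Sv1 := Finset.sum_nonneg fun j _ =>
    mul_nonneg (norm_nonneg _) (pow_nonneg hs0.le _)
  have hSw1n : 0 ≤ Sw1 := Finset.sum_nonneg fun j _ =>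
    mul_nonneg (norm_nonneg _) (pow_nonneg hs0.le _)
  have ineq0 : s ^ (2 * (M + 1)) * t0
      ≤ ‖α‖ * s ^ (2 * M) * t0 + ‖γ‖ * s ^ (2 * M) * t1
        + (Sv0 * t0 + Sw0 * t1) := by
    have e0 : ‖x ^ (M + 1) * y 0‖ = s ^ (2 * (M + 1)) * t0 := by
      rw [norm_mul, habsx]
    have habs1 : ‖α * (x ^ M * y 0)‖ = ‖α‖ * (s ^ (2 * M) * t0) := by
      rw [norm_mul, norm_mul, habsx]
    have habs2 : ‖γ * (x ^ M * y 1)‖ = ‖γ‖ * (s ^ (2 * M) * t1) := by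
      rw [norm_mul, norm_mul, habsx]
    have habs3 : ‖∑ j ∈ Finset.range M, x ^ j * (v (2 * j) * y 0 + w (2 * j) * y 1)‖
        ≤ Sv0 * t0 + Sw0 * t1 := by
      refine (norm_sum_le _ _).trans ?_
      have hterm : ∀ j ∈ Finset.range M,
          ‖x ^ j * (v (2 * j) * y 0 + w (2 * j) * y 1)‖
            ≤ ‖v (2 * j)‖ * s ^ (2 * j) * t0
              + ‖w (2 * j)‖ * s ^ (2 * j) * t1 := by
        intro j _
        rw [norm_mul, habsx]
        have h4 : ‖v (2 * j) * y 0 + w (2 * j) * y 1‖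
            ≤ ‖v (2 * j)‖ * t0 + ‖w (2 * j)‖ * t1 := by
          refine (norm_add_le _ _).trans ?_
          rw [norm_mul, norm_mul]
        calc s ^ (2 * j) * ‖v (2 * j) * y 0 + w (2 * j) * y 1‖
            ≤ s ^ (2 * j) * (‖v (2 * j)‖ * t0 + ‖w (2 * j)‖ * t1) :=
              mul_le_mul_of_nonneg_left h4 (pow_nonneg hs0.le _)
          _ = ‖v (2 * j)‖ * s ^ (2 * j) * t0
              + ‖w (2 * j)‖ * s ^ (2 * j) * t1 := by ring
      refine (Finset.sum_le_sum hterm).trans_eq ?_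
      rw [hSv0, hSw0, Finset.sum_mul, Finset.sum_mul, ← Finset.sum_add_distrib]
    calc s ^ (2 * (M + 1)) * t0 = ‖x ^ (M + 1) * y 0‖ := e0.symm
      _ = ‖α * (x ^ M * y 0) + γ * (x ^ M * y 1)
            + ∑ j ∈ Finset.range M, x ^ j * (v (2 * j) * y 0 + w (2 * j) * y 1)‖ := by
          rw [eq0]
      _ ≤ (‖α * (x ^ M * y 0)‖ + ‖γ * (x ^ M * y 1)‖)
            + (Sv0 * t0 + Sw0 * t1) :=
          (norm_add_le _ _).trans (add_le_add (norm_add_le _ _) habs3)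
      _ = ‖α‖ * s ^ (2 * M) * t0 + ‖γ‖ * s ^ (2 * M) * t1
            + (Sv0 * t0 + Sw0 * t1) := by rw [habs1, habs2]; ring
  have ineq1 : s ^ (2 * (M + 1)) * t1
      ≤ ‖β‖ * s ^ (2 * M) * t1 + (Pv * t0 + Pw * t1) := by
    have e0 : ‖x ^ (M + 1) * y 1‖ = s ^ (2 * (M + 1)) * t1 := by
      rw [norm_mul, habsx]
    have habs1 : ‖β * (x ^ M * y 1)‖ = ‖β‖ * (s ^ (2 * M) * t1) := by
      rw [norm_mul, norm_mul, habsx]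
    have habs3 : ‖∑ j ∈ Finset.range M, x ^ j * (v (2 * j + 1) * y 0 + w (2 * j + 1) * y 1)‖
        ≤ Pv * t0 + Pw * t1 := by
      refine (norm_sum_le _ _).trans ?_
      have hterm : ∀ j ∈ Finset.range M,
          ‖x ^ j * (v (2 * j + 1) * y 0 + w (2 * j + 1) * y 1)‖
            ≤ ‖v (2 * j + 1)‖ * s ^ (2 * j) * t0
              + ‖w (2 * j + 1)‖ * s ^ (2 * j) * t1 := by
        intro j _
        rw [norm_mul, habsx]
        have h4 : ‖v (2 * j + 1) * y 0 + w (2 * j + 1) * y 1‖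
            ≤ ‖v (2 * j + 1)‖ * t0 + ‖w (2 * j + 1)‖ * t1 := by
          refine (norm_add_le _ _).trans ?_
          rw [norm_mul, norm_mul]
        calc s ^ (2 * j) * ‖v (2 * j + 1) * y 0 + w (2 * j + 1) * y 1‖
            ≤ s ^ (2 * j)
                * (‖v (2 * j + 1)‖ * t0 + ‖w (2 * j + 1)‖ * t1) :=
              mul_le_mul_of_nonneg_left h4 (pow_nonneg hs0.le _)
          _ = ‖v (2 * j + 1)‖ * s ^ (2 * j) * t0
              + ‖w (2 * j + 1)‖ * s ^ (2 * j) * t1 := by ring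
      refine (Finset.sum_le_sum hterm).trans_eq ?_
      rw [hPv, hPw, Finset.sum_mul, Finset.sum_mul, ← Finset.sum_add_distrib]
    calc s ^ (2 * (M + 1)) * t1 = ‖x ^ (M + 1) * y 1‖ := e0.symm
      _ = ‖β * (x ^ M * y 1)
            + ∑ j ∈ Finset.range M, x ^ j * (v (2 * j + 1) * y 0 + w (2 * j + 1) * y 1)‖ := by
          rw [eq1]
      _ ≤ ‖β * (x ^ M * y 1)‖ + (Pv * t0 + Pw * t1) :=
          (norm_add_le _ _).trans (add_le_add_right habs3 _)
      _ = ‖β‖ * s ^ (2 * M) * t1 + (Pv * t0 + Pw * t1) := by rw [habs1]; ring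
  have hsPv : s * Pv = Sv1 := by
    rw [hPv, hSv1, Finset.mul_sum]
    exact Finset.sum_congr rfl fun j _ => by rw [pow_succ]; ring
  have hsPw : s * Pw = Sw1 := by
    rw [hPw, hSw1, Finset.mul_sum]
    exact Finset.sum_congr rfl fun j _ => by rw [pow_succ]; ring
  have ineq1s : s ^ (2 * M + 3) * t1
      ≤ ‖β‖ * s ^ (2 * M + 1) * t1 + (Sv1 * t0 + Sw1 * t1) := by
    have h5 := mul_le_mul_of_nonneg_left ineq1 hs0.le
    calc s ^ (2 * M + 3) * t1 = s * (s ^ (2 * (M + 1)) * t1) := by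
          rw [(by omega : 2 * M + 3 = 2 * (M + 1) + 1), pow_succ]; ring
      _ ≤ s * (‖β‖ * s ^ (2 * M) * t1 + (Pv * t0 + Pw * t1)) := h5
      _ = ‖β‖ * s ^ (2 * M + 1) * t1 + ((s * Pv) * t0 + (s * Pw) * t1) := by
          rw [pow_succ]; ring
      _ = _ := by rw [hsPv, hsPw]
  have ineq0s : s ^ (2 * M + 2) * t0
      ≤ ‖α‖ * s ^ (2 * M) * t0 + ‖γ‖ * s ^ (2 * M) * t1
        + (Sv0 * t0 + Sw0 * t1) := by
    rw [(by omega : 2 * M + 2 = 2 * (M + 1))]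
    exact ineq0
  -- positivity of the ψ's beyond their roots
  have hpos1 : ‖α‖ * s ^ (2 * M)
      + ∑ j ∈ Finset.range (2 * M), ‖v j‖ * s ^ j < s ^ (2 * M + 2) := by
    refine psi1_pos (2 * M) _ (norm_nonneg α) _
      (fun k => norm_nonneg _) r1 s hr1 hr1s ?_
    have h6 := hψ1 r1
    rw [hr1'] at h6
    rw [(by omega : 2 * (M + 1) = 2 * M + 2)] at h6
    linarith
  have hpos2 : ‖β‖ * s ^ (2 * M + 1) + ‖γ‖ * s ^ (2 * M)
      + ∑ j ∈ Finset.range (2 * M), ‖w j‖ * s ^ j < s ^ (2 * M + 3) := by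
    refine psi2_pos (2 * M) _ _ (norm_nonneg β) (norm_nonneg γ) _
      (fun k => norm_nonneg _) r2 s hr2 hr2s ?_
    have h6 := hψ2 r2
    rw [hr2'] at h6
    rw [(by omega : 2 * (M + 1) + 1 = 2 * M + 3)] at h6
    linarith
  have hsplitv : ∑ j ∈ Finset.range (2 * M), ‖v j‖ * s ^ j = Sv0 + Sv1 := by
    rw [sum_range_even_odd, Finset.sum_add_distrib, hSv0, hSv1]
  have hsplitw : ∑ j ∈ Finset.range (2 * M), ‖w j‖ * s ^ j = Sw0 + Sw1 := by
    rw [sum_range_even_odd, Finset.sum_add_distrib, hSw0, hSw1]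
  rw [hsplitv] at hpos1
  rw [hsplitw] at hpos2
  -- final contradiction
  have hy0eq : t0 = 0 → y 0 = 0 := fun h => by
    rw [ht0def] at h
    exact norm_eq_zero.mp h
  have hy1eq : t1 = 0 → y 1 = 0 := fun h => by
    rw [ht1def] at h
    exact norm_eq_zero.mp h
  set A1 := s ^ (2 * M + 2) - ‖α‖ * s ^ (2 * M) - Sv0 with hA1d
  set B1 := ‖γ‖ * s ^ (2 * M) + Sw0 with hB1d
  set A2 := s ^ (2 * M + 3) - ‖β‖ * s ^ (2 * M + 1) - Sw1 with hA2d
  have g1 : A1 * t0 ≤ B1 * t1 := by rw [hA1d, hB1d]; linarith [ineq0s]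
  have g2 : A2 * t1 ≤ Sv1 * t0 := by rw [hA2d]; linarith [ineq1s]
  have p1 : Sv1 < A1 := by rw [hA1d]; linarith [hpos1]
  have p2 : B1 < A2 := by rw [hA2d, hB1d]; linarith [hpos2]
  have hB1n : 0 ≤ B1 := by
    rw [hB1d]
    exact add_nonneg (mul_nonneg (norm_nonneg _) (pow_nonneg hs0.le _)) hSw0n
  have hA1p : 0 < A1 := lt_of_le_of_lt hSv1n p1
  have hA2p : 0 < A2 := lt_of_le_of_lt hB1n p2
  rcases eq_or_lt_of_le ht1 with h1 | h1
  · rw [← h1] at g1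
    have ht0le : t0 ≤ 0 :=
      le_of_mul_le_mul_left (by linarith [g1] : A1 * t0 ≤ A1 * 0) hA1p
    exact hynz ⟨hy0eq (le_antisymm ht0le ht0), hy1eq h1.symm⟩
  · rcases eq_or_lt_of_le ht0 with h0 | h0
    · rw [← h0] at g2
      have ht1le : t1 ≤ 0 :=
        le_of_mul_le_mul_left (by linarith [g2] : A2 * t1 ≤ A2 * 0) hA2p
      linarith
    · have key : A1 * t0 * (A2 * t1) ≤ B1 * t1 * (Sv1 * t0) :=
        mul_le_mul g1 g2 (mul_nonneg hA2p.le ht1) (mul_nonneg hB1n ht1)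
      have hx1 : B1 * Sv1 ≤ B1 * A1 := mul_le_mul_of_nonneg_left p1.le hB1n
      have hx2 : B1 * A1 < A2 * A1 := mul_lt_mul_of_pos_right p2 hA1p
      have hprod : B1 * Sv1 < A1 * A2 :=
        lt_of_le_of_lt hx1 (by rw [mul_comm A1 A2]; exact hx2)
      have e : A1 * A2 * (t0 * t1) ≤ B1 * Sv1 * (t0 * t1) := by linarith [key]
      have e2 : A1 * A2 ≤ B1 * Sv1 := (mul_le_mul_iff_of_pos_right (mul_pos h0 h1)).mp e
      linarith
end

section
/- With the setup in the context, define φ1(x) = x^m − |α| x^{m−1} − Σ_{k=1}^{m−1} (|v_{n−1−2k}| + |v_{n−2−2k}|) x^{m−1−k} and φ2(x) = x^m − (|β| + |γ|) x^{m−1} − Σ_{k=1}^{m−1} (|w_{n−1−2k}| + |w_{n−2−2k}|) x^{m−1−k}. Suppose s1 > 0 satisfies φ1(s1) = 0 and s2 > 0 satisfies φ2(s2) = 0. Then every zero z of p satisfies |z| ≤ (max{s1, s2})^{1/2}. -/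
lemma pair_sum {M : Type*} [AddCommMonoid M] (f : ℕ → M) (m : ℕ) :
    ∑ j ∈ Finset.range m, (f (2*j) + f (2*j+1)) = ∑ i ∈ Finset.range (2*m), f i := by
  induction m with
  | zero => simp
  | succ k ih =>
    rw [Finset.sum_range_succ, ih, show 2*(k+1) = (2*k+1)+1 by ring,
      Finset.sum_range_succ, Finset.sum_range_succ]
    abel

lemma icc_reflect (m' : ℕ) (c : ℕ → ℝ) :
    ∑ k ∈ Finset.Icc 1 m', c (m'-k) = ∑ j ∈ Finset.range m', c j := by
  rw [← Finset.Ico_add_one_right_eq_Icc, Finset.sum_Ico_eq_sum_range, Nat.add_sub_cancel,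
    ← Finset.sum_range_reflect (fun j => c j) m']
  apply Finset.sum_congr rfl
  intro i hi
  simp only [Finset.mem_range] at hi
  congr 1
  omega

lemma cauchy_mono (m' : ℕ) (A : ℝ) (c : ℕ → ℝ)
    (hc : ∀ j, 0 ≤ c j) (s t : ℝ) (hs : 0 < s) (hst : s < t)
    (hroot : s^(m'+1) = A * s^m' + ∑ j ∈ Finset.range m', c j * s^j) :
    A * t^m' + ∑ j ∈ Finset.range m', c j * t^j < t^(m'+1) := by
  have ht : 0 < t := hs.trans hst
  have key : (A * t^m' + ∑ j ∈ Finset.range m', c j * t^j) * s^m' ≤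
      (A * s^m' + ∑ j ∈ Finset.range m', c j * s^j) * t^m' := by
    rw [add_mul, add_mul, Finset.sum_mul, Finset.sum_mul]
    refine add_le_add (le_of_eq (by ring)) (Finset.sum_le_sum ?_)
    intro j hj
    rw [Finset.mem_range] at hj
    have hd : m' = j + (m'-j) := by omega
    rw [hd, pow_add, pow_add]
    have h1 : s^(m'-j) ≤ t^(m'-j) := pow_le_pow_left₀ hs.le hst.le _
    calc c j * t^j * (s^j * s^(m'-j)) = (c j * s^j * t^j) * s^(m'-j) := by ring
      _ ≤ (c j * s^j * t^j) * t^(m'-j) := mul_le_mul_of_nonneg_left h1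
            (mul_nonneg (mul_nonneg (hc j) (pow_nonneg hs.le j)) (pow_nonneg ht.le j))
      _ = c j * s^j * (t^j * t^(m'-j)) := by ring
  rw [← hroot] at key
  have key2 : s^(m'+1) * t^m' < t^(m'+1) * s^m' := by
    rw [pow_succ, pow_succ]
    have hp : 0 < s^m' * t^m' := by positivity
    nlinarith
  exact lt_of_mul_lt_mul_right (lt_of_le_of_lt key key2) (by positivity)

open Polynomial

theorem cauchy_like_phi
    (ℓ : ℕ) (hℓ : 3 ≤ ℓ) (b : ℕ → ℂ) (p : Polynomial ℂ)
    (hp : p = X ^ ℓ + ∑ i ∈ Finset.range ℓ, C (b i) * X ^ i)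
    (m n : ℕ) (hm : m = (ℓ + 1) / 2) (hn : n = 2 * m)
    (a : ℕ → ℂ)
    (haeven : Even ℓ → ∀ j, j < n → a j = b j)
    (haodd : ¬ Even ℓ → a 0 = 0 ∧ ∀ j, 1 ≤ j → j < n → a j = b (j - 1))
    (A : ℕ → Matrix (Fin 2) (Fin 2) ℂ)
    (hA0 : A 0 = !![-(a 0), a (n - 1) * a 0; -(a 1), a (n - 1) * a 1 - a 0])
    (hA : ∀ j, 1 ≤ j → j ≤ m - 1 →
      A j = !![-(a (2 * j)), a (n - 1) * a (2 * j) - a (2 * j - 1);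
               -(a (2 * j + 1)), a (n - 1) * a (2 * j + 1) - a (2 * j)])
    (S : Matrix (Fin 2) (Fin 2) ℂ) (hS : IsUnit S)
    (α β γ : ℂ)
    (htri : S⁻¹ * A (m - 1) * S = !![α, γ; 0, β])
    (v w : ℕ → ℂ)
    (hvw : ∀ j, j ≤ m - 2 →
      S⁻¹ * A j * S = !![v (2 * j), w (2 * j); v (2 * j + 1), w (2 * j + 1)])
    (φ1 φ2 : ℝ → ℝ)
    (hφ1 : ∀ x : ℝ, φ1 x = x ^ m - ‖α‖ * x ^ (m - 1)
        - ∑ k ∈ Finset.Icc 1 (m - 1),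
            (‖v (n - 1 - 2 * k)‖ + ‖v (n - 2 - 2 * k)‖) * x ^ (m - 1 - k))
    (hφ2 : ∀ x : ℝ, φ2 x = x ^ m - (‖β‖ + ‖γ‖) * x ^ (m - 1)
        - ∑ k ∈ Finset.Icc 1 (m - 1),
            (‖w (n - 1 - 2 * k)‖ + ‖w (n - 2 - 2 * k)‖) * x ^ (m - 1 - k))
    (s1 s2 : ℝ) (hs1 : 0 < s1) (hs1' : φ1 s1 = 0) (hs2 : 0 < s2) (hs2' : φ2 s2 = 0) :
    ∀ z : ℂ, p.eval z = 0 → ‖z‖ ≤ Real.sqrt (max s1 s2) := by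
  -- normalize m and n
  have hm2 : 2 ≤ m := by omega
  subst hn
  obtain ⟨m', rfl⟩ : ∃ m', m = m' + 1 := ⟨m - 1, by omega⟩
  have hm' : 1 ≤ m' := by omega
  simp only [Nat.add_sub_cancel] at hA htri hφ1 hφ2
  intro z hz
  set n : ℕ := 2 * (m' + 1) with hn
  -- the root equation for q
  have hpz : z ^ ℓ + ∑ i ∈ Finset.range ℓ, b i * z ^ i = 0 := by
    rw [hp] at hz
    simpa [eval_finset_sum] using hz
  have hq' : ∑ i ∈ Finset.range n, a i * z ^ i = -(z ^ n) := by
    have hq : z ^ n + ∑ i ∈ Finset.range n, a i * z ^ i = 0 := by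
      by_cases he : Even ℓ
      · have hn' : n = ℓ := by obtain ⟨k, hk⟩ := he; omega
        calc z ^ n + ∑ i ∈ Finset.range n, a i * z ^ i
            = z ^ ℓ + ∑ i ∈ Finset.range ℓ, b i * z ^ i := by
              rw [hn']
              congr 1
              refine Finset.sum_congr rfl fun i hi => ?_
              rw [Finset.mem_range] at hi
              rw [haeven he i (by omega)]
          _ = 0 := hpz
      · obtain ⟨ha0, haj⟩ := haodd he
        have hodd : ℓ % 2 = 1 := Nat.odd_iff.mp (Nat.not_even_iff_odd.mp he)
        have hn' : n = ℓ + 1 := by omega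
        rw [hn', Finset.sum_range_succ' (fun i => a i * z ^ i) ℓ]
        have h1 : ∑ i ∈ Finset.range ℓ, a (i+1) * z ^ (i+1)
            = ∑ i ∈ Finset.range ℓ, z * (b i * z ^ i) := by
          refine Finset.sum_congr rfl fun i hi => ?_
          rw [Finset.mem_range] at hi
          rw [haj (i+1) (by omega) (by omega), Nat.add_sub_cancel, pow_succ]
          ring
        rw [h1, ← Finset.mul_sum, ha0, pow_succ]
        calc z ^ ℓ * z + (z * ∑ i ∈ Finset.range ℓ, b i * z ^ i + 0 * z ^ 0)
            = z * (z ^ ℓ + ∑ i ∈ Finset.range ℓ, b i * z ^ i) := by ring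
          _ = 0 := by rw [hpz, mul_zero]
    linear_combination hq
  -- shifted sum
  have hshift : ∑ i ∈ Finset.range n, a i * z ^ (i+1) = -(z ^ (n+1)) := by
    have h1 : ∑ i ∈ Finset.range n, a i * z ^ (i+1)
        = ∑ i ∈ Finset.range n, z * (a i * z ^ i) := by
      refine Finset.sum_congr rfl fun i _ => ?_
      rw [pow_succ]; ring
    rw [h1, ← Finset.mul_sum, hq', pow_succ]
    ring
  -- pairing of the root equation
  have hpair : ∑ j ∈ Finset.range (m'+1), (a (2*j) * z ^ (2*j) + a (2*j+1) * z ^ (2*j+1))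
      = -(z ^ n) := by
    rw [pair_sum (fun i => a i * z ^ i) (m'+1)]
    exact hq'
  -- decomposition of the shifted sum
  have hdecomp : (∑ j ∈ Finset.range m', (a (2*j+1) * z ^ (2*j+1+1) + a (2*j+1+1) * z ^ (2*j+1+1+1)))
      + a (2*m'+1) * z ^ (2*m'+1+1) + a 0 * z ^ (0+1) = -(z ^ (n+1)) := by
    rw [pair_sum (fun i => a (i+1) * z ^ (i+1+1)) m']
    rw [← Finset.sum_range_succ (fun i => a (i+1) * z ^ (i+1+1)) (2*m')]
    rw [← Finset.sum_range_succ' (fun i => a i * z ^ (i+1)) (2*m'+1)]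
    rw [show (2*m'+1)+1 = n from by omega]
    exact hshift
  -- the two key scalar identities
  have entry_simp : True := trivial
  have K1 : ∑ j ∈ Finset.range (m'+1), (z^2)^j * (A j 0 0 * (z + a (n-1)) + A j 0 1 * 1)
      = (z^2)^(m'+1) * (z + a (n-1)) := by
    rw [Finset.sum_range_succ' (fun j => (z^2)^j * (A j 0 0 * (z + a (n-1)) + A j 0 1 * 1)) m']
    have hterm : ∀ i ∈ Finset.range m',
        (z^2)^(i+1) * (A (i+1) 0 0 * (z + a (n-1)) + A (i+1) 0 1 * 1)
        = -(a (2*i+1) * z^(2*i+1+1) + a (2*i+1+1) * z^(2*i+1+1+1)) := by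
      intro i hi
      rw [Finset.mem_range] at hi
      rw [hA (i+1) (by omega) (by omega)]
      simp only [Matrix.cons_val', Matrix.cons_val_zero, Matrix.cons_val_one, Matrix.head_cons,
        Matrix.empty_val', Matrix.cons_val_fin_one, Matrix.head_fin_const, Matrix.of_apply]
      rw [show 2*(i+1)-1 = 2*i+1 from by omega, show 2*(i+1) = 2*i+1+1 from by omega]
      ring
    rw [Finset.sum_congr rfl hterm, hA0]
    simp only [Matrix.cons_val', Matrix.cons_val_zero, Matrix.cons_val_one, Matrix.head_cons,
      Matrix.empty_val', Matrix.cons_val_fin_one, Matrix.head_fin_const, Matrix.of_apply]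
    rw [hn] at hdecomp
    rw [show n-1 = 2*m'+1 from by omega, Finset.sum_neg_distrib]
    linear_combination -hdecomp
  have K2 : ∑ j ∈ Finset.range (m'+1), (z^2)^j * (A j 1 0 * (z + a (n-1)) + A j 1 1 * 1)
      = (z^2)^(m'+1) * 1 := by
    have hterm : ∀ j ∈ Finset.range (m'+1),
        (z^2)^j * (A j 1 0 * (z + a (n-1)) + A j 1 1 * 1)
        = -(a (2*j) * z^(2*j) + a (2*j+1) * z^(2*j+1)) := by
      intro j hj
      rw [Finset.mem_range] at hj
      rcases Nat.eq_zero_or_pos j with rfl | hj1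
      · rw [hA0]
        simp only [Matrix.cons_val', Matrix.cons_val_zero, Matrix.cons_val_one, Matrix.head_cons,
          Matrix.empty_val', Matrix.cons_val_fin_one, Matrix.head_fin_const, Matrix.of_apply]
        ring
      · rw [hA j hj1 (by omega)]
        simp only [Matrix.cons_val', Matrix.cons_val_zero, Matrix.cons_val_one, Matrix.head_cons,
          Matrix.empty_val', Matrix.cons_val_fin_one, Matrix.head_fin_const, Matrix.of_apply]
        ring
    rw [Finset.sum_congr rfl hterm]
    rw [Finset.sum_neg_distrib, hpair, neg_neg, hn]
    ring
  -- transport through S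
  set x : Fin 2 → ℂ := ![z + a (n-1), 1] with hx
  set y : Fin 2 → ℂ := (S⁻¹).mulVec x with hy
  have hSdet : IsUnit S.det := (Matrix.isUnit_iff_isUnit_det S).mp hS
  have hSS : S * S⁻¹ = 1 := Matrix.mul_nonsing_inv S hSdet
  have hSy : S.mulVec y = x := by
    rw [hy, Matrix.mulVec_mulVec, hSS, Matrix.one_mulVec]
  have hstep : ∀ j : ℕ, (S⁻¹ * A j * S).mulVec y = (S⁻¹).mulVec ((A j).mulVec x) := by
    intro j
    rw [← Matrix.mulVec_mulVec, hSy, ← Matrix.mulVec_mulVec]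
  have HB : ∀ i, ∑ j ∈ Finset.range (m'+1), (z^2)^j * ((S⁻¹ * A j * S).mulVec y i)
      = (z^2)^(m'+1) * y i := by
    intro i
    have expand : ∀ j, (S⁻¹ * A j * S).mulVec y i
        = S⁻¹ i 0 * (A j 0 0 * (z + a (n-1)) + A j 0 1 * 1)
          + S⁻¹ i 1 * (A j 1 0 * (z + a (n-1)) + A j 1 1 * 1) := by
      intro j
      rw [hstep j]
      simp [Matrix.mulVec, dotProduct, Fin.sum_univ_two, hx]
    have hys : y i = S⁻¹ i 0 * (z + a (n-1)) + S⁻¹ i 1 * 1 := by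
      rw [hy]
      simp [Matrix.mulVec, dotProduct, Fin.sum_univ_two, hx]
    calc ∑ j ∈ Finset.range (m'+1), (z^2)^j * ((S⁻¹ * A j * S).mulVec y i)
        = S⁻¹ i 0 * (∑ j ∈ Finset.range (m'+1), (z^2)^j * (A j 0 0 * (z + a (n-1)) + A j 0 1 * 1))
          + S⁻¹ i 1 * (∑ j ∈ Finset.range (m'+1), (z^2)^j * (A j 1 0 * (z + a (n-1)) + A j 1 1 * 1)) := by
          rw [Finset.mul_sum, Finset.mul_sum, ← Finset.sum_add_distrib]
          exact Finset.sum_congr rfl fun j _ => by rw [expand j]; ring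
      _ = (z^2)^(m'+1) * y i := by rw [K1, K2, hys]; ring
  have E1 : (z^2)^(m'+1) * y 0 = ∑ j ∈ Finset.range m', (z^2)^j * (v (2*j) * y 0 + w (2*j) * y 1)
      + (z^2)^m' * (α * y 0 + γ * y 1) := by
    have h := HB 0
    rw [Finset.sum_range_succ, htri] at h
    have hterm : ∀ j ∈ Finset.range m', (z^2)^j * ((S⁻¹ * A j * S).mulVec y 0)
        = (z^2)^j * (v (2*j) * y 0 + w (2*j) * y 1) := by
      intro j hj
      rw [Finset.mem_range] at hj
      rw [hvw j (by omega)]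
      simp [Matrix.mulVec, dotProduct, Fin.sum_univ_two]
    rw [Finset.sum_congr rfl hterm] at h
    rw [show (!![α, γ; 0, β]).mulVec y 0 = α * y 0 + γ * y 1 from by
      simp [Matrix.mulVec, dotProduct, Fin.sum_univ_two]] at h
    exact h.symm
  have E2 : (z^2)^(m'+1) * y 1 = ∑ j ∈ Finset.range m', (z^2)^j * (v (2*j+1) * y 0 + w (2*j+1) * y 1)
      + (z^2)^m' * (β * y 1) := by
    have h := HB 1
    rw [Finset.sum_range_succ, htri] at h
    have hterm : ∀ j ∈ Finset.range m', (z^2)^j * ((S⁻¹ * A j * S).mulVec y 1)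
        = (z^2)^j * (v (2*j+1) * y 0 + w (2*j+1) * y 1) := by
      intro j hj
      rw [Finset.mem_range] at hj
      rw [hvw j (by omega)]
      simp [Matrix.mulVec, dotProduct, Fin.sum_univ_two]
    rw [Finset.sum_congr rfl hterm] at h
    rw [show (!![α, γ; 0, β]).mulVec y 1 = β * y 1 from by
      simp [Matrix.mulVec, dotProduct, Fin.sum_univ_two]] at h
    exact h.symm
  -- endgame
  by_contra hcon
  push_neg at hcon
  set T : ℝ := ‖z‖ ^ 2 with hT
  have hmax0 : 0 ≤ max s1 s2 := le_max_of_le_left hs1.le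
  have hTgt : max s1 s2 < T := by
    have h0 : Real.sqrt (max s1 s2) ≥ 0 := Real.sqrt_nonneg _
    nlinarith [Real.sq_sqrt hmax0, hcon]
  have hs1T : s1 < T := lt_of_le_of_lt (le_max_left _ _) hTgt
  have hs2T : s2 < T := lt_of_le_of_lt (le_max_right _ _) hTgt
  have hT0 : 0 < T := hs1.trans hs1T
  set Y0 : ℝ := ‖y 0‖ with hY0d
  set Y1 : ℝ := ‖y 1‖ with hY1d
  have hY0 : 0 ≤ Y0 := norm_nonneg _
  have hY1 : 0 ≤ Y1 := norm_nonneg _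
  have hTz : ‖z^2‖ = T := by rw [norm_pow]
  have habs : ∀ (c d : ℂ) (j : ℕ), ‖(z^2)^j * (c * y 0 + d * y 1)‖
      ≤ T^j * (‖c‖ * Y0 + ‖d‖ * Y1) := by
    intro c d j
    rw [norm_mul, norm_pow, hTz]
    refine mul_le_mul_of_nonneg_left ?_ (by positivity)
    calc ‖c * y 0 + d * y 1‖ ≤ ‖c * y 0‖ + ‖d * y 1‖ :=
          norm_add_le _ _
      _ = ‖c‖ * Y0 + ‖d‖ * Y1 := by rw [norm_mul, norm_mul]
  have hE1' : T^(m'+1) * Y0 ≤ (∑ j ∈ Finset.range m', T^j * (‖v (2*j)‖ * Y0 + ‖w (2*j)‖ * Y1))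
      + T^m' * (‖α‖ * Y0 + ‖γ‖ * Y1) := by
    have heq : T^(m'+1) * Y0 = ‖(z^2)^(m'+1) * y 0‖ := by
      rw [norm_mul, norm_pow, hTz]
    rw [heq, E1]
    refine le_trans (norm_add_le _ _) (add_le_add ?_ (habs α γ m'))
    refine le_trans (norm_sum_le _ _) (Finset.sum_le_sum fun j _ => habs _ _ j)
  have hE2' : T^(m'+1) * Y1 ≤ (∑ j ∈ Finset.range m', T^j * (‖v (2*j+1)‖ * Y0 + ‖w (2*j+1)‖ * Y1))
      + T^m' * (‖β‖ * Y1) := by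
    have heq : T^(m'+1) * Y1 = ‖(z^2)^(m'+1) * y 1‖ := by
      rw [norm_mul, norm_pow, hTz]
    rw [heq, E2]
    refine le_trans (norm_add_le _ _) (add_le_add ?_ ?_)
    · exact le_trans (norm_sum_le _ _) (Finset.sum_le_sum fun j _ => habs _ _ j)
    · rw [norm_mul, norm_pow, hTz, norm_mul]
  -- root equations for s1, s2
  have hr1 : s1^(m'+1) = ‖α‖ * s1^m'
      + ∑ j ∈ Finset.range m', (‖v (2*j+1)‖ + ‖v (2*j)‖) * s1^j := by
    have h := hφ1 s1
    rw [hs1'] at h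
    have hsum1 : ∑ k ∈ Finset.Icc 1 m',
        (‖v (n-1-2*k)‖ + ‖v (n-2-2*k)‖) * s1^(m'-k)
        = ∑ j ∈ Finset.range m', (‖v (2*j+1)‖ + ‖v (2*j)‖) * s1^j := by
      calc ∑ k ∈ Finset.Icc 1 m', (‖v (n-1-2*k)‖ + ‖v (n-2-2*k)‖) * s1^(m'-k)
          = ∑ k ∈ Finset.Icc 1 m',
            (fun j => (‖v (2*j+1)‖ + ‖v (2*j)‖) * s1^j) (m'-k) := by
            refine Finset.sum_congr rfl fun k hk => ?_
            simp only [Finset.mem_Icc] at hk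
            rw [show n-1-2*k = 2*(m'-k)+1 from by omega, show n-2-2*k = 2*(m'-k) from by omega]
        _ = _ := icc_reflect m' (fun j => (‖v (2*j+1)‖ + ‖v (2*j)‖) * s1^j)
    rw [hsum1] at h
    linarith
  have hr2 : s2^(m'+1) = (‖β‖ + ‖γ‖) * s2^m'
      + ∑ j ∈ Finset.range m', (‖w (2*j+1)‖ + ‖w (2*j)‖) * s2^j := by
    have h := hφ2 s2
    rw [hs2'] at h
    have hsum2 : ∑ k ∈ Finset.Icc 1 m',
        (‖w (n-1-2*k)‖ + ‖w (n-2-2*k)‖) * s2^(m'-k)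
        = ∑ j ∈ Finset.range m', (‖w (2*j+1)‖ + ‖w (2*j)‖) * s2^j := by
      calc ∑ k ∈ Finset.Icc 1 m', (‖w (n-1-2*k)‖ + ‖w (n-2-2*k)‖) * s2^(m'-k)
          = ∑ k ∈ Finset.Icc 1 m',
            (fun j => (‖w (2*j+1)‖ + ‖w (2*j)‖) * s2^j) (m'-k) := by
            refine Finset.sum_congr rfl fun k hk => ?_
            simp only [Finset.mem_Icc] at hk
            rw [show n-1-2*k = 2*(m'-k)+1 from by omega, show n-2-2*k = 2*(m'-k) from by omega]
        _ = _ := icc_reflect m' (fun j => (‖w (2*j+1)‖ + ‖w (2*j)‖) * s2^j)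
    rw [hsum2] at h
    linarith
  have hB1 : ‖α‖ * T^m'
      + ∑ j ∈ Finset.range m', (‖v (2*j+1)‖ + ‖v (2*j)‖) * T^j
      < T^(m'+1) :=
    cauchy_mono m' _ _ (fun j => by positivity) s1 T hs1 hs1T hr1
  have hB2 : (‖β‖ + ‖γ‖) * T^m'
      + ∑ j ∈ Finset.range m', (‖w (2*j+1)‖ + ‖w (2*j)‖) * T^j
      < T^(m'+1) :=
    cauchy_mono m' _ _ (fun j => by positivity) s2 T hs2 hs2T hr2
  -- combine
  have hs' : (∑ j ∈ Finset.range m', T^j * (‖v (2*j)‖ * Y0 + ‖w (2*j)‖ * Y1))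
      + (∑ j ∈ Finset.range m', T^j * (‖v (2*j+1)‖ * Y0 + ‖w (2*j+1)‖ * Y1))
      = (∑ j ∈ Finset.range m', (‖v (2*j+1)‖ + ‖v (2*j)‖) * T^j) * Y0
        + (∑ j ∈ Finset.range m', (‖w (2*j+1)‖ + ‖w (2*j)‖) * T^j) * Y1 := by
    rw [Finset.sum_mul, Finset.sum_mul, ← Finset.sum_add_distrib, ← Finset.sum_add_distrib]
    exact Finset.sum_congr rfl fun j _ => by ring
  have hypos : 0 < Y0 + Y1 := by
    rcases lt_or_eq_of_le (add_nonneg hY0 hY1) with h | h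
    · exact h
    · exfalso
      have h0 : Y0 = 0 := by linarith
      have h1 : Y1 = 0 := by linarith
      have hy0 : y 0 = 0 := norm_eq_zero.mp h0
      have hy1 : y 1 = 0 := norm_eq_zero.mp h1
      have hyz : y = 0 := by
        funext i
        fin_cases i
        · exact hy0
        · exact hy1
      have : x 1 = 0 := by rw [← hSy, hyz, Matrix.mulVec_zero]; rfl
      rw [hx] at this
      simp at this
  have hcomb : ((∑ j ∈ Finset.range m', T^j * (‖v (2*j)‖ * Y0 + ‖w (2*j)‖ * Y1))
      + T^m' * (‖α‖ * Y0 + ‖γ‖ * Y1))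
      + ((∑ j ∈ Finset.range m', T^j * (‖v (2*j+1)‖ * Y0 + ‖w (2*j+1)‖ * Y1))
      + T^m' * (‖β‖ * Y1))
      = (‖α‖ * T^m'
          + ∑ j ∈ Finset.range m', (‖v (2*j+1)‖ + ‖v (2*j)‖) * T^j) * Y0
        + ((‖β‖ + ‖γ‖) * T^m'
          + ∑ j ∈ Finset.range m', (‖w (2*j+1)‖ + ‖w (2*j)‖) * T^j) * Y1 := by
    linear_combination hs'
  rcases (by by_contra hc; push_neg at hc; obtain ⟨h1, h2⟩ := hc; linarith :
      0 < Y0 ∨ 0 < Y1) with hpos | hpos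
  · have h1 : (‖α‖ * T^m'
        + ∑ j ∈ Finset.range m', (‖v (2*j+1)‖ + ‖v (2*j)‖) * T^j) * Y0
        < T^(m'+1) * Y0 := mul_lt_mul_of_pos_right hB1 hpos
    have h2 : ((‖β‖ + ‖γ‖) * T^m'
        + ∑ j ∈ Finset.range m', (‖w (2*j+1)‖ + ‖w (2*j)‖) * T^j) * Y1
        ≤ T^(m'+1) * Y1 := mul_le_mul_of_nonneg_right hB2.le hY1
    linarith [h1, h2, hE1', hE2', hcomb]
  · have h1 : (‖α‖ * T^m'
        + ∑ j ∈ Finset.range m', (‖v (2*j+1)‖ + ‖v (2*j)‖) * T^j) * Y0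
        ≤ T^(m'+1) * Y0 := mul_le_mul_of_nonneg_right hB1.le hY0
    have h2 : ((‖β‖ + ‖γ‖) * T^m'
        + ∑ j ∈ Finset.range m', (‖w (2*j+1)‖ + ‖w (2*j)‖) * T^j) * Y1
        < T^(m'+1) * Y1 := mul_lt_mul_of_pos_right hB2 hpos
    linarith [h1, h2, hE1', hE2', hcomb]
end

section
/- Let a_{n−1}, a_{n−2}, a_{n−3} ∈ ℂ and define the 2×2 complex matrix A_{m−1} = [[−a_{n−2}, a_{n−1}a_{n−2} − a_{n−3}],[−a_{n−1}, a_{n−1}² − a_{n−2}]]. If a_{n−1}(a_{n−1}³ − 4a_{n−1}a_{n−2} + 4a_{n−3}) = 0 and it is not the case that both a_{n−1} = 0 and a_{n−3} = 0, then A_{m−1} is not diagonalizable over ℂ (i.e., there is no invertible 2×2 complex matrix S with S^{−1}A_{m−1}S diagonal). -/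
open Polynomial

theorem A_not_diagonalizable
    (an1 an2 an3 : ℂ)
    (M : Matrix (Fin 2) (Fin 2) ℂ)
    (hM : M = !![-an2, an1 * an2 - an3; -an1, an1 ^ 2 - an2])
    (h : an1 * (an1 ^ 3 - 4 * an1 * an2 + 4 * an3) = 0)
    (h' : ¬ (an1 = 0 ∧ an3 = 0)) :
    ¬ ∃ S : Matrix (Fin 2) (Fin 2) ℂ, IsUnit S ∧
      ∃ d1 d2 : ℂ, S⁻¹ * M * S = !![d1, 0; 0, d2] := by
  rintro ⟨S, hS, d1, d2, hD⟩
  have hdet : IsUnit S.det := (Matrix.isUnit_iff_isUnit_det S).mp hS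
  have hinv : S * S⁻¹ = 1 := Matrix.mul_nonsing_inv S hdet
  have hinv' : S⁻¹ * S = 1 := Matrix.nonsing_inv_mul S hdet
  -- recover M from the conjugation
  have hMval : M = S * !![d1, 0; 0, d2] * S⁻¹ := by
    calc M = S * (S⁻¹ * M * S) * S⁻¹ := by
            rw [Matrix.mul_assoc, Matrix.mul_assoc, Matrix.mul_assoc, hinv,
              Matrix.mul_one, ← Matrix.mul_assoc, hinv, Matrix.one_mul]
      _ = S * !![d1, 0; 0, d2] * S⁻¹ := by rw [hD]
  -- trace and det are preserved
  have htr : d1 + d2 = an1 ^ 2 - 2 * an2 := by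
    have : Matrix.trace (S⁻¹ * M * S) = Matrix.trace M := by
      rw [Matrix.trace_mul_cycle, hinv, Matrix.one_mul]
    rw [hD, hM] at this
    simp [Matrix.trace_fin_two] at this
    linear_combination this
  have hdt : d1 * d2 = an2 ^ 2 - an1 * an3 := by
    have : (S⁻¹ * M * S).det = M.det := by
      rw [Matrix.det_mul, Matrix.det_mul, Matrix.det_nonsing_inv]
      rw [mul_comm (Ring.inverse _) _, mul_assoc, Ring.inverse_mul_cancel _ hdet, mul_one]
    rw [hD, hM] at this
    simp [Matrix.det_fin_two] at this
    linear_combination this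
  have hd : d1 = d2 := by
    have hsq : (d1 - d2) ^ 2 = 0 := by
      have : (d1 - d2) ^ 2 = (d1 + d2) ^ 2 - 4 * (d1 * d2) := by ring
      rw [this, htr, hdt]
      linear_combination h
    have := pow_eq_zero_iff (n := 2) (by norm_num) |>.mp hsq
    exact sub_eq_zero.mp this
  -- then M is scalar
  have hMs : M = d1 • (1 : Matrix (Fin 2) (Fin 2) ℂ) := by
    rw [hMval, ← hd]
    have : (!![d1, 0; 0, d1] : Matrix (Fin 2) (Fin 2) ℂ) = d1 • 1 := by
      ext i j; fin_cases i <;> fin_cases j <;> simp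
    rw [this, Matrix.mul_smul, Matrix.mul_one, Matrix.smul_mul, hinv]
  have h10 : M 1 0 = 0 := by rw [hMs]; simp
  have h01 : M 0 1 = 0 := by rw [hMs]; simp
  rw [hM] at h10 h01
  simp [Matrix.cons_val_zero, Matrix.cons_val_one] at h10 h01
  exact h' ⟨h10, by simp [h10] at h01; simp [h01]⟩
end

section
/- With the setup in the context, define for x > 0: σ1(x) = Σ_{k=1}^{m−1} (|v_{n−1−2k}| + |v_{n−2−2k}|) x^{−k} and σ2(x) = |γ| + Σ_{k=1}^{m−1} (|w_{n−1−2k}| + |w_{n−2−2k}|) x^{−k}. Then for every x > 0 and every zero z of p, at least one of the following holds: |z²| ≤ x, or |z² − α| ≤ σ1(x), or |z² − β| ≤ σ2(x). -/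
open Polynomial Finset

lemma sum_range_two_mul' (m : ℕ) (f : ℕ → ℂ) :
    ∑ i ∈ Finset.range (2 * m), f i
      = ∑ j ∈ Finset.range m, (f (2 * j) + f (2 * j + 1)) := by
  induction m with
  | zero => simp
  | succ k ih =>
      rw [show 2 * (k+1) = 2*k+1+1 by ring, Finset.sum_range_succ, Finset.sum_range_succ, ih,
        Finset.sum_range_succ]
      ring

lemma abs_dichotomy (p11 p12 p21 p22 : ℂ) (h : p11 * p22 = p12 * p21) :
    ‖p11‖ ≤ ‖p21‖ ∨ ‖p22‖ ≤ ‖p12‖ := by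
  by_contra hc
  push_neg at hc
  obtain ⟨h1, h2⟩ := hc
  have h3 := congrArg norm h
  simp only [norm_mul] at h3
  nlinarith [norm_nonneg p21, norm_nonneg p12, norm_nonneg p11,
    norm_nonneg p22]

theorem gershgorin_union_sigma
    (ℓ : ℕ) (hℓ : 3 ≤ ℓ) (b : ℕ → ℂ) (p : Polynomial ℂ)
    (hp : p = X ^ ℓ + ∑ i ∈ Finset.range ℓ, C (b i) * X ^ i)
    (m n : ℕ) (hm : m = (ℓ + 1) / 2) (hn : n = 2 * m)
    (a : ℕ → ℂ)
    (haeven : Even ℓ → ∀ j, j < n → a j = b j)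
    (haodd : ¬ Even ℓ → a 0 = 0 ∧ ∀ j, 1 ≤ j → j < n → a j = b (j - 1))
    (A : ℕ → Matrix (Fin 2) (Fin 2) ℂ)
    (hA0 : A 0 = !![-(a 0), a (n - 1) * a 0; -(a 1), a (n - 1) * a 1 - a 0])
    (hA : ∀ j, 1 ≤ j → j ≤ m - 1 →
      A j = !![-(a (2 * j)), a (n - 1) * a (2 * j) - a (2 * j - 1);
               -(a (2 * j + 1)), a (n - 1) * a (2 * j + 1) - a (2 * j)])
    (S : Matrix (Fin 2) (Fin 2) ℂ) (hS : IsUnit S)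
    (α β γ : ℂ)
    (htri : S⁻¹ * A (m - 1) * S = !![α, γ; 0, β])
    (v w : ℕ → ℂ)
    (hvw : ∀ j, j ≤ m - 2 →
      S⁻¹ * A j * S = !![v (2 * j), w (2 * j); v (2 * j + 1), w (2 * j + 1)])
    (σ1 σ2 : ℝ → ℝ)
    (hσ1 : ∀ x : ℝ, 0 < x → σ1 x = ∑ k ∈ Finset.Icc 1 (m - 1),
        (‖v (n - 1 - 2 * k)‖ + ‖v (n - 2 - 2 * k)‖) / x ^ k)
    (hσ2 : ∀ x : ℝ, 0 < x → σ2 x = ‖γ‖ + ∑ k ∈ Finset.Icc 1 (m - 1),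
        (‖w (n - 1 - 2 * k)‖ + ‖w (n - 2 - 2 * k)‖) / x ^ k)
    : ∀ x : ℝ, 0 < x → ∀ z : ℂ, p.eval z = 0 →
      ‖z ^ 2‖ ≤ x ∨ ‖z ^ 2 - α‖ ≤ σ1 x ∨
        ‖z ^ 2 - β‖ ≤ σ2 x := by
  intro x hx z hz
  by_cases htx : ‖z ^ 2‖ ≤ x
  · exact Or.inl htx
  push_neg at htx
  right
  set t : ℂ := z ^ 2 with htdef
  have hm2 : 2 ≤ m := by omega
  have hm1 : m - 1 + 1 = m := by omega
  have hpeel : ∀ (g : ℕ → ℂ), ∑ j ∈ Finset.range m, g j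
      = (∑ j ∈ Finset.range (m-1), g (j+1)) + g 0 := by
    intro g
    conv_lhs => rw [← hm1]
    rw [Finset.sum_range_succ']
  set c : ℂ := a (n-1) with hc
  set Ee : ℂ := ∑ j ∈ Finset.range m, a (2*j) * t^j with hEe
  set Oo : ℂ := ∑ j ∈ Finset.range m, a (2*j+1) * t^j with hOo
  set O' : ℂ := ∑ j ∈ Finset.range (m-1), a (2*j+1) * t^j with hO'
  have htt : t ^ m = t * t^(m-1) := by
    conv_lhs => rw [← hm1]
    rw [pow_succ]; ring
  -- Claim A : q(z) = 0
  have hqz : t ^ m + Ee + z * Oo = 0 := by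
    have hEq : Ee + z * Oo = ∑ i ∈ Finset.range n, a i * z ^ i := by
      rw [hn, sum_range_two_mul', hEe, hOo, Finset.mul_sum, ← Finset.sum_add_distrib]
      refine Finset.sum_congr rfl fun j _ => ?_
      rw [htdef, ← pow_mul, pow_succ]
      ring
    have htm : t ^ m = z ^ n := by rw [htdef, ← pow_mul, hn]
    rw [hp] at hz
    simp only [Polynomial.eval_add, Polynomial.eval_pow, Polynomial.eval_X,
      Polynomial.eval_finset_sum, Polynomial.eval_mul, Polynomial.eval_C] at hz
    rw [add_assoc, hEq, htm]
    by_cases hev : Even ℓ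
    · have hnℓ : n = ℓ := by rw [Nat.even_iff] at hev; omega
      rw [hnℓ]
      calc z^ℓ + ∑ i ∈ Finset.range ℓ, a i * z^i
          = z^ℓ + ∑ i ∈ Finset.range ℓ, b i * z^i := by
            congr 1
            refine Finset.sum_congr rfl fun i hi => ?_
            simp only [Finset.mem_range] at hi
            rw [haeven hev i (by omega)]
        _ = 0 := hz
    · have hnℓ : n = ℓ + 1 := by rw [Nat.even_iff] at hev; omega
      obtain ⟨ha0, haj⟩ := haodd hev
      rw [hnℓ, Finset.sum_range_succ', ha0]
      have hs : ∑ i ∈ Finset.range ℓ, a (i+1) * z^(i+1)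
          = z * ∑ i ∈ Finset.range ℓ, b i * z^i := by
        rw [Finset.mul_sum]
        refine Finset.sum_congr rfl fun i hi => ?_
        simp only [Finset.mem_range] at hi
        rw [haj (i+1) (by omega) (by omega)]
        simp only [Nat.add_sub_cancel]
        rw [pow_succ]
        ring
      rw [hs]
      have : z^(ℓ+1) + (z * ∑ i ∈ Finset.range ℓ, b i * z^i + 0 * z^0)
          = z * (z^ℓ + ∑ i ∈ Finset.range ℓ, b i * z^i) := by ring
      rw [this, hz, mul_zero]
  -- Claim B : det D = 0
  set D : Matrix (Fin 2) (Fin 2) ℂ := t^m • 1 - ∑ j ∈ Finset.range m, t^j • A j with hD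
  have hDapp : ∀ i k : Fin 2, D i k
      = t^m * (1 : Matrix (Fin 2) (Fin 2) ℂ) i k - ∑ j ∈ Finset.range m, t^j * A j i k := by
    intro i k
    rw [hD, Matrix.sub_apply, Matrix.smul_apply, Matrix.sum_apply, smul_eq_mul]
    simp only [Matrix.smul_apply, smul_eq_mul]
  have hA00 : ∀ j, j < m → A j 0 0 = -(a (2*j)) := by
    intro j hj
    rcases Nat.eq_zero_or_pos j with h0 | h1
    · subst h0; rw [hA0]; simp
    · rw [hA j h1 (by omega)]; simp
  have hA10 : ∀ j, j < m → A j 1 0 = -(a (2*j+1)) := by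
    intro j hj
    rcases Nat.eq_zero_or_pos j with h0 | h1
    · subst h0; rw [hA0]; simp
    · rw [hA j h1 (by omega)]; simp
  have hA11 : ∀ j, j < m → A j 1 1 = c * a (2*j+1) - a (2*j) := by
    intro j hj
    rcases Nat.eq_zero_or_pos j with h0 | h1
    · subst h0; rw [hA0]; simp [hc]
    · rw [hA j h1 (by omega)]; simp [hc]
  have hS00 : ∑ j ∈ Finset.range m, t^j * A j 0 0 = -Ee := by
    rw [hEe, ← Finset.sum_neg_distrib]
    refine Finset.sum_congr rfl fun j hj => ?_
    simp only [Finset.mem_range] at hj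
    rw [hA00 j hj]; ring
  have hS10 : ∑ j ∈ Finset.range m, t^j * A j 1 0 = -Oo := by
    rw [hOo, ← Finset.sum_neg_distrib]
    refine Finset.sum_congr rfl fun j hj => ?_
    simp only [Finset.mem_range] at hj
    rw [hA10 j hj]; ring
  have hS11 : ∑ j ∈ Finset.range m, t^j * A j 1 1 = c * Oo - Ee := by
    rw [hOo, hEe, Finset.mul_sum, ← Finset.sum_sub_distrib]
    refine Finset.sum_congr rfl fun j hj => ?_
    simp only [Finset.mem_range] at hj
    rw [hA11 j hj]; ring
  have hS01 : ∑ j ∈ Finset.range m, t^j * A j 0 1 = c * Ee - t * O' := by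
    rw [hpeel (fun j => t ^ j * A j 0 1)]
    have h1 : ∀ j ∈ Finset.range (m-1), t^(j+1) * A (j+1) 0 1
        = c * (a (2*(j+1)) * t^(j+1)) - t * (a (2*j+1) * t^j) := by
      intro j hj
      simp only [Finset.mem_range] at hj
      rw [hA (j+1) (by omega) (by omega)]
      have h2 : 2*(j+1) - 1 = 2*j+1 := by omega
      simp only [Matrix.cons_val', Matrix.cons_val_zero, Matrix.cons_val_one, Matrix.head_cons,
        Matrix.empty_val', Matrix.cons_val_fin_one, Matrix.of_apply, Matrix.head_fin_const]
      rw [h2]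
      ring
    rw [Finset.sum_congr rfl h1, Finset.sum_sub_distrib, ← Finset.mul_sum, ← Finset.mul_sum,
      hEe, hO', hpeel (fun j => a (2*j) * t^j), hA0]
    simp only [Matrix.cons_val', Matrix.cons_val_zero, Matrix.cons_val_one, Matrix.head_cons,
      Matrix.empty_val', Matrix.cons_val_fin_one, Matrix.of_apply, Matrix.head_fin_const]
    ring
  have hD00 : D 0 0 = t^m + Ee := by
    rw [hDapp, hS00, Matrix.one_apply_eq]; ring
  have hD01 : D 0 1 = t * O' - c * Ee := by
    rw [hDapp, hS01, Matrix.one_apply_ne (by decide)]; ring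
  have hD10 : D 1 0 = Oo := by
    rw [hDapp, hS10, Matrix.one_apply_ne (by decide)]; ring
  have hD11 : D 1 1 = t^m + Ee - c * Oo := by
    rw [hDapp, hS11, Matrix.one_apply_eq]; ring
  have hOos : Oo = O' + c * t^(m-1) := by
    rw [hOo, hO']
    conv_lhs => rw [← hm1]
    rw [Finset.sum_range_succ]
    have h2 : 2*(m-1)+1 = n-1 := by omega
    rw [h2, ← hc]
  have hdetD : D.det = 0 := by
    rw [Matrix.det_fin_two, hD00, hD01, hD10, hD11]
    calc (t^m + Ee) * (t^m + Ee - c * Oo) - (t * O' - c * Ee) * Oo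
        = (t^m + Ee + z * Oo) * (t^m + Ee - z * Oo) := by
          rw [hOos, htt]
          generalize t^(m-1) = P
          rw [htdef]
          ring
      _ = 0 := by rw [hqz, zero_mul]
  -- Claim C : M and its entries
  set M : Matrix (Fin 2) (Fin 2) ℂ := t^m • 1 - ∑ j ∈ Finset.range m, t^j • (S⁻¹ * A j * S)
    with hM
  have hMD : M = S⁻¹ * D * S := by
    rw [hM, hD, Matrix.mul_sub, Matrix.sub_mul]
    congr 1
    · rw [Matrix.mul_smul, Matrix.smul_mul, mul_one,
        Matrix.nonsing_inv_mul S ((Matrix.isUnit_iff_isUnit_det S).mp hS)]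
    · rw [Finset.mul_sum, Finset.sum_mul]
      refine Finset.sum_congr rfl fun j _ => ?_
      rw [Matrix.mul_smul, Matrix.smul_mul]
  have hdetM : M.det = 0 := by
    rw [hMD, Matrix.det_mul, Matrix.det_mul, hdetD]
    ring
  set V0 : ℂ := ∑ j ∈ Finset.range (m-1), t^j * v (2*j) with hV0
  set V1 : ℂ := ∑ j ∈ Finset.range (m-1), t^j * v (2*j+1) with hV1
  set W0 : ℂ := ∑ j ∈ Finset.range (m-1), t^j * w (2*j) with hW0
  set W1 : ℂ := ∑ j ∈ Finset.range (m-1), t^j * w (2*j+1) with hW1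
  have hMapp : ∀ i k : Fin 2, M i k = t^m * (1 : Matrix (Fin 2) (Fin 2) ℂ) i k
      - ((∑ j ∈ Finset.range (m-1),
            t^j * (!![v (2*j), w (2*j); v (2*j+1), w (2*j+1)] : Matrix (Fin 2) (Fin 2) ℂ) i k)
          + t^(m-1) * (!![α, γ; 0, β] : Matrix (Fin 2) (Fin 2) ℂ) i k) := by
    intro i k
    rw [hM, Matrix.sub_apply, Matrix.smul_apply, smul_eq_mul, Matrix.sum_apply]
    congr 1
    have hsplit : ∑ j ∈ Finset.range m, (t^j • (S⁻¹ * A j * S)) i k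
        = (∑ j ∈ Finset.range (m-1), (t^j • (S⁻¹ * A j * S)) i k)
          + (t^(m-1) • (S⁻¹ * A (m-1) * S)) i k := by
      conv_lhs => rw [← hm1]
      rw [Finset.sum_range_succ]
    rw [hsplit, htri]
    have h2 : ∀ j ∈ Finset.range (m-1), (t^j • (S⁻¹ * A j * S)) i k
        = t^j * (!![v (2*j), w (2*j); v (2*j+1), w (2*j+1)] : Matrix (Fin 2) (Fin 2) ℂ) i k := by
      intro j hj
      simp only [Finset.mem_range] at hj
      rw [Matrix.smul_apply, smul_eq_mul, hvw j (by omega)]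
    rw [Finset.sum_congr rfl h2]
    rfl
  have hM00 : M 0 0 = t^m - α * t^(m-1) - V0 := by
    rw [hMapp, Matrix.one_apply_eq, hV0]
    simp only [Matrix.cons_val', Matrix.cons_val_zero, Matrix.cons_val_one, Matrix.head_cons,
      Matrix.empty_val', Matrix.cons_val_fin_one, Matrix.of_apply, Matrix.head_fin_const]
    ring
  have hM01 : M 0 1 = -(γ * t^(m-1)) - W0 := by
    rw [hMapp, Matrix.one_apply_ne (by decide), hW0]
    simp only [Matrix.cons_val', Matrix.cons_val_zero, Matrix.cons_val_one, Matrix.head_cons,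
      Matrix.empty_val', Matrix.cons_val_fin_one, Matrix.of_apply, Matrix.head_fin_const]
    ring
  have hM10 : M 1 0 = -V1 := by
    rw [hMapp, Matrix.one_apply_ne (by decide), hV1]
    simp only [Matrix.cons_val', Matrix.cons_val_zero, Matrix.cons_val_one, Matrix.head_cons,
      Matrix.empty_val', Matrix.cons_val_fin_one, Matrix.of_apply, Matrix.head_fin_const]
    ring
  have hM11 : M 1 1 = t^m - β * t^(m-1) - W1 := by
    rw [hMapp, Matrix.one_apply_eq, hW1]
    simp only [Matrix.cons_val', Matrix.cons_val_zero, Matrix.cons_val_one, Matrix.head_cons,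
      Matrix.empty_val', Matrix.cons_val_fin_one, Matrix.of_apply, Matrix.head_fin_const]
    ring
  have hkey : (t^m - α * t^(m-1) - V0) * (t^m - β * t^(m-1) - W1)
      = (-(γ * t^(m-1)) - W0) * (-V1) := by
    have h4 := hdetM
    rw [Matrix.det_fin_two, hM00, hM01, hM10, hM11] at h4
    linear_combination h4
  -- numeric estimates
  set T : ℝ := ‖t‖ with hT
  have hTpos : 0 < T := lt_trans hx htx
  have habs : ∀ (u : ℕ → ℂ), ‖∑ j ∈ Finset.range (m-1), t^j * u j‖
      ≤ ∑ j ∈ Finset.range (m-1), ‖u j‖ * T^j := by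
    intro u
    refine le_trans (norm_sum_le _ _) ?_
    refine Finset.sum_le_sum fun j _ => ?_
    rw [norm_mul, norm_pow]
    exact (mul_comm _ _).le
  have hTj : ∀ j, j < m - 1 → T^(m-1) = T^j * T^(m-1-j) := by
    intro j hj
    rw [← pow_add]
    congr 1
    omega
  rcases abs_dichotomy _ _ _ _ hkey with hcase | hcase
  · -- first Gershgorin disc
    left
    have hbound : ‖t - α‖ * T^(m-1)
        ≤ ∑ j ∈ Finset.range (m-1),
            (‖v (2*j+1)‖ + ‖v (2*j)‖) * T^j := by
      have e1 : (t - α) * t^(m-1) = (t^m - α * t^(m-1) - V0) + V0 := by rw [htt]; ring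
      calc ‖t - α‖ * T^(m-1)
          = ‖(t - α) * t^(m-1)‖ := by rw [norm_mul, norm_pow]
        _ = ‖(t^m - α * t^(m-1) - V0) + V0‖ := by rw [e1]
        _ ≤ ‖t^m - α * t^(m-1) - V0‖ + ‖V0‖ := norm_add_le _ _
        _ ≤ ‖V1‖ + ‖V0‖ := by
            refine add_le_add ?_ le_rfl
            calc ‖t^m - α * t^(m-1) - V0‖ ≤ ‖-V1‖ := hcase
              _ = ‖V1‖ := norm_neg V1
        _ ≤ (∑ j ∈ Finset.range (m-1), ‖v (2*j+1)‖ * T^j)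
            + ∑ j ∈ Finset.range (m-1), ‖v (2*j)‖ * T^j := by
            refine add_le_add ?_ ?_
            · rw [hV1]; exact habs _
            · rw [hV0]; exact habs _
        _ = _ := by
            rw [← Finset.sum_add_distrib]
            exact Finset.sum_congr rfl fun j _ => by ring
    have hσ1' : σ1 x = ∑ j ∈ Finset.range (m-1),
        (‖v (2*j+1)‖ + ‖v (2*j)‖) / x^(m-1-j) := by
      rw [hσ1 x hx]
      apply Finset.sum_nbij' (fun k => m-1-k) (fun j => m-1-j)
      · intro k hk; simp only [Finset.mem_Icc] at hk; simp only [Finset.mem_range]; omega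
      · intro j hj; simp only [Finset.mem_range] at hj; simp only [Finset.mem_Icc]; omega
      · intro k hk; simp only [Finset.mem_Icc] at hk; omega
      · intro j hj; simp only [Finset.mem_range] at hj; omega
      · intro k hk
        simp only [Finset.mem_Icc] at hk
        have e1 : n - 1 - 2*k = 2*(m-1-k)+1 := by omega
        have e2 : n - 2 - 2*k = 2*(m-1-k) := by omega
        have e3 : m-1-(m-1-k) = k := by omega
        rw [e1, e2, e3]
    have hstep : ∀ j ∈ Finset.range (m-1),
        (‖v (2*j+1)‖ + ‖v (2*j)‖) * T^j
        ≤ ((‖v (2*j+1)‖ + ‖v (2*j)‖) / x^(m-1-j)) * T^(m-1) := by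
      intro j hj
      simp only [Finset.mem_range] at hj
      rw [div_mul_eq_mul_div, le_div_iff₀ (pow_pos hx _)]
      have hnn : (0:ℝ) ≤ (‖v (2*j+1)‖ + ‖v (2*j)‖) * T^j :=
        mul_nonneg (add_nonneg (norm_nonneg _) (norm_nonneg _))
          (pow_nonneg hTpos.le _)
      calc (‖v (2*j+1)‖ + ‖v (2*j)‖) * T^j * x^(m-1-j)
          ≤ (‖v (2*j+1)‖ + ‖v (2*j)‖) * T^j * T^(m-1-j) :=
            mul_le_mul_of_nonneg_left (pow_le_pow_left₀ hx.le htx.le _) hnn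
        _ = (‖v (2*j+1)‖ + ‖v (2*j)‖) * T^(m-1) := by
            rw [mul_assoc, ← hTj j hj]
    have final : ‖t - α‖ * T^(m-1) ≤ σ1 x * T^(m-1) := by
      rw [hσ1', Finset.sum_mul]
      exact le_trans hbound (Finset.sum_le_sum hstep)
    exact le_of_mul_le_mul_right final (pow_pos hTpos _)
  · -- second Gershgorin disc
    right
    have hbound : ‖t - β‖ * T^(m-1)
        ≤ ‖γ‖ * T^(m-1) + ∑ j ∈ Finset.range (m-1),
            (‖w (2*j)‖ + ‖w (2*j+1)‖) * T^j := by
      have e1 : (t - β) * t^(m-1) = (t^m - β * t^(m-1) - W1) + W1 := by rw [htt]; ring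
      calc ‖t - β‖ * T^(m-1)
          = ‖(t - β) * t^(m-1)‖ := by rw [norm_mul, norm_pow]
        _ = ‖(t^m - β * t^(m-1) - W1) + W1‖ := by rw [e1]
        _ ≤ ‖t^m - β * t^(m-1) - W1‖ + ‖W1‖ := norm_add_le _ _
        _ ≤ ‖-(γ * t^(m-1)) - W0‖ + ‖W1‖ := add_le_add hcase le_rfl
        _ ≤ (‖-(γ * t^(m-1))‖ + ‖W0‖) + ‖W1‖ :=
            add_le_add (norm_sub_le _ _) le_rfl
        _ = ‖γ‖ * T^(m-1) + (‖W0‖ + ‖W1‖) := by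
            rw [norm_neg, norm_mul, norm_pow]
            ring
        _ ≤ ‖γ‖ * T^(m-1)
            + ((∑ j ∈ Finset.range (m-1), ‖w (2*j)‖ * T^j)
              + ∑ j ∈ Finset.range (m-1), ‖w (2*j+1)‖ * T^j) := by
            refine add_le_add le_rfl (add_le_add ?_ ?_)
            · rw [hW0]; exact habs _
            · rw [hW1]; exact habs _
        _ = _ := by
            rw [← Finset.sum_add_distrib]
            exact congrArg _ (Finset.sum_congr rfl fun j _ => by ring)
    have hσ2' : σ2 x = ‖γ‖ + ∑ j ∈ Finset.range (m-1),
        (‖w (2*j)‖ + ‖w (2*j+1)‖) / x^(m-1-j) := by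
      rw [hσ2 x hx]
      congr 1
      apply Finset.sum_nbij' (fun k => m-1-k) (fun j => m-1-j)
      · intro k hk; simp only [Finset.mem_Icc] at hk; simp only [Finset.mem_range]; omega
      · intro j hj; simp only [Finset.mem_range] at hj; simp only [Finset.mem_Icc]; omega
      · intro k hk; simp only [Finset.mem_Icc] at hk; omega
      · intro j hj; simp only [Finset.mem_range] at hj; omega
      · intro k hk
        simp only [Finset.mem_Icc] at hk
        have e1 : n - 1 - 2*k = 2*(m-1-k)+1 := by omega
        have e2 : n - 2 - 2*k = 2*(m-1-k) := by omega
        have e3 : m-1-(m-1-k) = k := by omega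
        rw [e1, e2, e3]
        ring
    have hstep : ∀ j ∈ Finset.range (m-1),
        (‖w (2*j)‖ + ‖w (2*j+1)‖) * T^j
        ≤ ((‖w (2*j)‖ + ‖w (2*j+1)‖) / x^(m-1-j)) * T^(m-1) := by
      intro j hj
      simp only [Finset.mem_range] at hj
      rw [div_mul_eq_mul_div, le_div_iff₀ (pow_pos hx _)]
      have hnn : (0:ℝ) ≤ (‖w (2*j)‖ + ‖w (2*j+1)‖) * T^j :=
        mul_nonneg (add_nonneg (norm_nonneg _) (norm_nonneg _))
          (pow_nonneg hTpos.le _)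
      calc (‖w (2*j)‖ + ‖w (2*j+1)‖) * T^j * x^(m-1-j)
          ≤ (‖w (2*j)‖ + ‖w (2*j+1)‖) * T^j * T^(m-1-j) :=
            mul_le_mul_of_nonneg_left (pow_le_pow_left₀ hx.le htx.le _) hnn
        _ = (‖w (2*j)‖ + ‖w (2*j+1)‖) * T^(m-1) := by
            rw [mul_assoc, ← hTj j hj]
    have final : ‖t - β‖ * T^(m-1) ≤ σ2 x * T^(m-1) := by
      rw [hσ2', add_mul, Finset.sum_mul]
      exact le_trans hbound (add_le_add le_rfl (Finset.sum_le_sum hstep))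
    exact le_of_mul_le_mul_right final (pow_pos hTpos _)
end

section
/- (Cauchy's theorem, scalar version.) Let p(z) = z^n + a_{n−1}z^{n−1} + … + a_1 z + a_0 be a monic polynomial with complex coefficients, n ≥ 2, and suppose not all of a_0,…,a_{n−1} are zero. Then the real polynomial f(x) = x^n − |a_{n−1}| x^{n−1} − … − |a_1| x − |a_0| has a unique positive root s, and every zero z of p satisfies |z| ≤ s. -/
open Polynomial

theorem cauchy_scalar
    (n : ℕ) (hn : 2 ≤ n) (a : ℕ → ℂ) (p : Polynomial ℂ)
    (hp : p = X ^ n + ∑ i ∈ Finset.range n, C (a i) * X ^ i)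
    (ha : ∃ j, j < n ∧ a j ≠ 0) :
    ∃ s : ℝ, 0 < s ∧
      (s ^ n - ∑ j ∈ Finset.range n, ‖a j‖ * s ^ j = 0) ∧
      (∀ t : ℝ, 0 < t → t ^ n - ∑ j ∈ Finset.range n, ‖a j‖ * t ^ j = 0 → t = s) ∧
      (∀ z : ℂ, p.eval z = 0 → ‖z‖ ≤ s) := by
  obtain ⟨J, hJn, hJ⟩ := ha
  set b : ℕ → ℝ := fun j => ‖a j‖ with hb
  have hb0 : ∀ j, 0 ≤ b j := fun j => norm_nonneg _
  have hbJ : 0 < b J := norm_pos_iff.mpr hJ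
  set h : ℝ → ℝ := fun t => ∑ j ∈ Finset.range n, b j / t ^ (n - j) with hh
  -- strict antitonicity on positives
  have hanti : ∀ x y : ℝ, 0 < x → x < y → h y < h x := by
    intro x y hx hxy
    apply Finset.sum_lt_sum
    · intro j hj
      have hxp : (0:ℝ) < x ^ (n - j) := pow_pos hx _
      have hp2 : x ^ (n - j) ≤ y ^ (n - j) := pow_le_pow_left₀ hx.le hxy.le _
      gcongr
    · refine ⟨J, Finset.mem_range.2 hJn, ?_⟩
      have hnj : 0 < n - J := by omega
      have hxy' : x ^ (n - J) < y ^ (n - J) :=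
        pow_lt_pow_left₀ hxy hx.le (by omega)
      exact div_lt_div_of_pos_left hbJ (pow_pos hx _) hxy'
  -- key identity
  have hkey : ∀ t : ℝ, 0 < t →
      (∑ j ∈ Finset.range n, b j * t ^ j) = t ^ n * h t := by
    intro t ht
    rw [hh, Finset.mul_sum]
    refine Finset.sum_congr rfl fun j hj => ?_
    have hjn : j ≤ n := (Finset.mem_range.1 hj).le
    have htn : t ^ n = t ^ j * t ^ (n - j) := by rw [← pow_add]; congr 1; omega
    rw [htn]
    field_simp
  -- choose endpoints
  set S : ℝ := ∑ j ∈ Finset.range n, b j with hS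
  have hS0 : 0 ≤ S := Finset.sum_nonneg fun j _ => hb0 j
  set t0 : ℝ := min 1 (b J / 2) with ht0def
  set t1 : ℝ := max 1 S with ht1def
  have ht0pos : 0 < t0 := lt_min one_pos (by linarith)
  have ht0le1 : t0 ≤ 1 := min_le_left _ _
  have ht1ge1 : (1:ℝ) ≤ t1 := le_max_left _ _
  have ht01 : t0 ≤ t1 := ht0le1.trans ht1ge1
  have hht0 : 1 ≤ h t0 := by
    have h1 : b J / t0 ^ (n - J) ≤ h t0 := by
      refine Finset.single_le_sum (f := fun j => b j / t0 ^ (n - j)) ?_ (Finset.mem_range.2 hJn)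
      intro j _
      exact div_nonneg (hb0 j) (pow_pos ht0pos _).le
    have h2 : t0 ^ (n - J) ≤ t0 := by
      calc t0 ^ (n - J) ≤ t0 ^ 1 := pow_le_pow_of_le_one ht0pos.le ht0le1 (by omega)
        _ = t0 := pow_one _
    have h3 : t0 ≤ b J / 2 := min_le_right _ _
    have h4 : (1:ℝ) ≤ b J / t0 := by
      rw [le_div_iff₀ ht0pos]; linarith
    have h5 : b J / t0 ≤ b J / t0 ^ (n - J) := by
      gcongr
    linarith
  have hht1 : h t1 ≤ 1 := by
    have ht1pos : (0:ℝ) < t1 := lt_of_lt_of_le one_pos ht1ge1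
    have h1 : h t1 ≤ S / t1 := by
      rw [hh, hS, Finset.sum_div]
      refine Finset.sum_le_sum fun j hj => ?_
      have : t1 ≤ t1 ^ (n - j) := by
        calc t1 = t1 ^ 1 := (pow_one _).symm
          _ ≤ t1 ^ (n - j) := pow_le_pow_right₀ ht1ge1 (by have := Finset.mem_range.1 hj; omega)
      gcongr
    have h2 : S / t1 ≤ 1 := by
      rw [div_le_one ht1pos]
      exact le_max_right _ _
    linarith
  -- continuity
  have hcont : ContinuousOn h (Set.Icc t0 t1) := by
    refine continuousOn_finset_sum _ fun j _ => ?_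
    refine ContinuousOn.div continuousOn_const ((continuousOn_pow _).comp continuousOn_id (by tauto)) ?_
    intro x hx
    have : 0 < x := lt_of_lt_of_le ht0pos hx.1
    exact pow_ne_zero _ this.ne'
  have h1mem : (1:ℝ) ∈ Set.Icc (h t1) (h t0) := ⟨hht1, hht0⟩
  obtain ⟨s, hsmem, hs1⟩ := intermediate_value_Icc' ht01 hcont h1mem
  have hspos : 0 < s := lt_of_lt_of_le ht0pos hsmem.1
  have hroot : ∀ t : ℝ, 0 < t →
      ((t ^ n - ∑ j ∈ Finset.range n, b j * t ^ j = 0) ↔ h t = 1) := by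
    intro t ht
    rw [hkey t ht]
    constructor
    · intro hz
      have htn : (0:ℝ) < t ^ n := pow_pos ht _
      have : t ^ n * 1 = t ^ n * h t := by linarith
      exact (mul_left_cancel₀ htn.ne' this).symm
    · intro hz; rw [hz]; ring
  refine ⟨s, hspos, ?_, ?_, ?_⟩
  · exact (hroot s hspos).2 hs1
  · intro t ht htz
    have h2 : h t = 1 := (hroot t ht).1 htz
    rcases lt_trichotomy t s with hlt | heq | hgt
    · exact absurd (hanti t s ht hlt) (by rw [h2, hs1]; exact lt_irrefl 1)
    · exact heq
    · exact absurd (hanti s t hspos hgt) (by rw [h2, hs1]; exact lt_irrefl 1)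
  · intro z hz
    rw [hp] at hz
    simp only [eval_add, eval_pow, eval_X, eval_finset_sum, eval_mul, eval_C] at hz
    have hz' : z ^ n = -(∑ i ∈ Finset.range n, a i * z ^ i) := by
      rw [eq_neg_iff_add_eq_zero]; exact hz
    have habs : ‖z‖ ^ n ≤ ∑ i ∈ Finset.range n, b i * ‖z‖ ^ i := by
      calc ‖z‖ ^ n = ‖z ^ n‖ := (norm_pow _ _).symm
        _ = ‖∑ i ∈ Finset.range n, a i * z ^ i‖ := by rw [hz', norm_neg]
        _ ≤ ∑ i ∈ Finset.range n, ‖a i * z ^ i‖ := norm_sum_le _ _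
        _ = ∑ i ∈ Finset.range n, b i * ‖z‖ ^ i := by
            simp [norm_mul, norm_pow, hb]
    by_contra hcon
    push_neg at hcon
    have hzpos : 0 < ‖z‖ := hspos.trans hcon
    have hlt : h (‖z‖) < 1 := by
      have := hanti s (‖z‖) hspos hcon
      rwa [hs1] at this
    have hge : (1:ℝ) ≤ h (‖z‖) := by
      have hk := hkey _ hzpos
      have htn : (0:ℝ) < ‖z‖ ^ n := pow_pos hzpos _
      rw [hk] at habs
      exact (le_mul_iff_one_le_right htn).1 habs
    linarith
end

section
/- (Pellet's theorem, scalar version.) Let p(z) = z^n + a_{n−1}z^{n−1} + … + a_1 z + a_0 be a monic polynomial with complex coefficients, n ≥ 2, let 1 ≤ k ≤ n−1 with a_k ≠ 0, and suppose the real polynomial f(x) = x^n + |a_{n−1}| x^{n−1} + … + |a_{k+1}| x^{k+1} − |a_k| x^k + |a_{k−1}| x^{k−1} + … + |a_1| x + |a_0| has two distinct positive roots x1 < x2. Then, counting multiplicity, p has exactly k zeros z with |z| ≤ x1, and p has no zero z with x1 < |z| < x2. -/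
open Polynomial Metric Set

private lemma convexOn_zpow' (m : ℤ) : ConvexOn ℝ (Set.Ioi 0) fun x : ℝ => x ^ m := by
  rcases eq_or_ne m 0 with rfl | h0
  · simpa using convexOn_const (1 : ℝ) (convex_Ioi (0 : ℝ))
  rcases eq_or_ne m 1 with rfl | h1
  · simp only [zpow_one]; exact convexOn_id (convex_Ioi (0 : ℝ))
  exact (strictConvexOn_zpow h0 h1).convexOn

private lemma circleIntegral_inv_sub_eq_zero {w : ℂ} {r : ℝ} (hr : 0 ≤ r)
    (hw : r < ‖w‖) : (∮ z in C(0, r), (z - w)⁻¹) = 0 := by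
  have hne : ∀ z ∈ closedBall (0 : ℂ) r, z - w ≠ 0 := by
    intro z hz h
    rw [sub_eq_zero] at h
    subst h
    rw [mem_closedBall_zero_iff] at hz
    exact absurd hw (not_lt.mpr hz)
  apply Complex.circleIntegral_eq_zero_of_differentiable_on_off_countable hr
    Set.countable_empty
  · exact ContinuousOn.inv₀ (by fun_prop) hne
  · intro z hz
    exact ((differentiableAt_id.sub (differentiableAt_const w)).inv
      (hne z (ball_subset_closedBall hz.1)))

open Classical in
private lemma circleIntegral_add' {f g : ℂ → ℂ} {c : ℂ} {r : ℝ}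
    (hf : CircleIntegrable f c r) (hg : CircleIntegrable g c r) :
    (∮ z in C(c, r), (f z + g z)) = (∮ z in C(c, r), f z) + ∮ z in C(c, r), g z := by
  simp only [circleIntegral, smul_add]
  exact intervalIntegral.integral_add hf.out hg.out

private lemma circleIntegrable_multiset_sum (r : ℝ) (hr : 0 ≤ r) (M : Multiset ℂ)
    (hM : ∀ w ∈ M, ‖w‖ ≠ r) :
    CircleIntegrable (fun z => (M.map (fun w => (z - w)⁻¹)).sum) 0 r := by
  induction M using Multiset.induction_on with
  | empty => simpa using circleIntegrable_const (0 : ℂ) 0 r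
  | cons w M ih =>
    have h1 : CircleIntegrable (fun z => (z - w)⁻¹) 0 r := by
      refine circleIntegrable_sub_inv_iff.mpr (Or.inr fun hmem => ?_)
      exact hM w (Multiset.mem_cons_self w M)
        (by rwa [mem_sphere_zero_iff_norm, abs_of_nonneg hr] at hmem)
    have h2 := ih (fun w' hw' => hM w' (Multiset.mem_cons_of_mem hw'))
    have := h1.add h2
    simp only [Multiset.map_cons, Multiset.sum_cons]
    exact this

open Classical in
private lemma circleIntegral_multiset_sum (r : ℝ) (hr : 0 < r) (M : Multiset ℂ)
    (hM : ∀ w ∈ M, ‖w‖ ≠ r) :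
    (∮ z in C(0, r), (M.map (fun w => (z - w)⁻¹)).sum)
      = (2 * Real.pi * Complex.I) * (M.filter (fun w => ‖w‖ < r)).card := by
  induction M using Multiset.induction_on with
  | empty => simp [circleIntegral]
  | cons w M ih =>
    have hw : ‖w‖ ≠ r := hM w (Multiset.mem_cons_self w M)
    have hM' : ∀ w' ∈ M, ‖w'‖ ≠ r := fun w' hw' => hM w' (Multiset.mem_cons_of_mem hw')
    have h1 : CircleIntegrable (fun z => (z - w)⁻¹) 0 r := by
      refine circleIntegrable_sub_inv_iff.mpr (Or.inr fun hmem => ?_)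
      exact hw (by rwa [mem_sphere_zero_iff_norm, abs_of_nonneg hr.le] at hmem)
    have h2 := circleIntegrable_multiset_sum r hr.le M hM'
    have key : (∮ z in C(0, r), ((w ::ₘ M).map (fun w => (z - w)⁻¹)).sum)
        = (∮ z in C(0, r), (z - w)⁻¹)
          + ∮ z in C(0, r), (M.map (fun w => (z - w)⁻¹)).sum := by
      rw [← circleIntegral_add' h1 h2]
      refine circleIntegral.integral_congr hr.le fun z _ => ?_
      simp
    rw [key, ih hM']
    rcases lt_or_gt_of_ne hw with hlt | hgt
    · rw [circleIntegral.integral_sub_inv_of_mem_ball (by simpa [mem_ball_zero_iff] using hlt)]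
      simp only [Multiset.filter_cons, if_pos hlt, Multiset.card_add, Multiset.card_singleton]
      push_cast
      ring
    · rw [circleIntegral_inv_sub_eq_zero hr.le hgt]
      simp only [Multiset.filter_cons, if_neg (not_lt.mpr hgt.le), Multiset.card_add,
        Multiset.card_zero]
      ring


open Classical in
private lemma logDeriv_eval (P : Polynomial ℂ) (hP : P.Monic) (z : ℂ)
    (hz : eval z P ≠ 0) :
    eval z (derivative P) = ((P.roots.map fun w => (z - w)⁻¹).sum) * eval z P := by
  have hsplit : P = (P.roots.map fun w => X - C w).prod :=
    (IsAlgClosed.splits P).eq_prod_roots_of_monic hP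
  have hevalP : eval z P = (P.roots.map fun w => z - w).prod := by
    conv_lhs => rw [hsplit]
    rw [eval_multiset_prod, Multiset.map_map]
    congr 1
    refine Multiset.map_congr rfl fun w _ => by simp
  have hzw : ∀ w ∈ P.roots, z - w ≠ 0 := by
    intro w hw h
    apply hz
    rw [hevalP]
    exact Multiset.prod_eq_zero (h ▸ Multiset.mem_map_of_mem (fun w => z - w) hw)
  conv_lhs => rw [hsplit]
  have hsum : ∀ (s : Multiset (Polynomial ℂ)), eval z s.sum = (s.map (eval z)).sum :=
    fun s => map_multiset_sum (evalRingHom z) s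
  rw [derivative_prod, hsum, Multiset.map_map]
  rw [← Multiset.sum_map_mul_right]
  refine congrArg Multiset.sum (Multiset.map_congr rfl fun w hw => ?_)
  simp only [Function.comp_apply, derivative_sub, derivative_X, derivative_C, sub_zero, mul_one,
    eval_mul, eval_multiset_prod, Multiset.map_map]
  have : ((P.roots.erase w).map fun a => z - a).prod
      = (z - w)⁻¹ * eval z P := by
    have h2 : (z - w) * ((P.roots.erase w).map fun a => z - a).prod = eval z P := by
      rw [hevalP]
      conv_rhs => rw [← Multiset.cons_erase hw]
      rw [Multiset.map_cons, Multiset.prod_cons]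
    rw [← h2, inv_mul_cancel_left₀ (hzw w hw)]
  rw [← this]
  congr 1
  refine Multiset.map_congr rfl fun a _ => by simp

open Classical in
private lemma argument_principle (P : Polynomial ℂ) (hP : P.Monic) (r : ℝ) (hr : 0 < r)
    (hroots : ∀ w ∈ P.roots, ‖w‖ ≠ r) :
    (∮ z in C(0, r), eval z (derivative P) / eval z P)
      = (2 * Real.pi * Complex.I) * (P.roots.filter (fun w => ‖w‖ < r)).card := by
  have hne : ∀ z ∈ sphere (0 : ℂ) r, eval z P ≠ 0 := by
    intro z hz h
    have : z ∈ P.roots := by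
      rw [mem_roots hP.ne_zero]
      exact h
    exact hroots z this (by rwa [mem_sphere_zero_iff_norm] at hz)
  have : ∀ z ∈ sphere (0 : ℂ) r, eval z (derivative P) / eval z P
      = (P.roots.map fun w => (z - w)⁻¹).sum := by
    intro z hz
    rw [logDeriv_eval P hP z (hne z hz), mul_div_assoc, div_self (hne z hz), mul_one]
  rw [circleIntegral.integral_congr hr.le this]
  exact circleIntegral_multiset_sum r hr P.roots hroots



private lemma convexOn_finset_sum {ι : Type*} (t : Finset ι) (F : ι → ℝ → ℝ)
    (h : ∀ i ∈ t, ConvexOn ℝ (Set.Ioi (0:ℝ)) (F i)) :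
    ConvexOn ℝ (Set.Ioi (0:ℝ)) (fun x => ∑ i ∈ t, F i x) := by
  induction t using Finset.cons_induction with
  | empty => simpa using convexOn_const (0:ℝ) (convex_Ioi (0:ℝ))
  | cons i t hi ih =>
    simp only [Finset.sum_cons]
    exact (h i (Finset.mem_cons_self i t)).add (ih fun j hj => h j (Finset.mem_cons_of_mem hj))

private lemma degree_sum_lt' {R : Type*} [Semiring R] (n : ℕ) (c : ℕ → R) (t : Finset ℕ)
    (ht : ∀ j ∈ t, j < n) : (∑ j ∈ t, C (c j) * X ^ j).degree < (n : WithBot ℕ) := by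
  apply lt_of_le_of_lt (degree_sum_le _ _)
  rw [Finset.sup_lt_iff (by exact_mod_cast WithBot.bot_lt_coe n)]
  intro j hj
  exact lt_of_le_of_lt (degree_C_mul_X_pow_le _ _) (by exact_mod_cast ht j hj)

open Classical in
/-- Number of roots (counted with multiplicity) of `p` satisfying predicate `P`. -/
noncomputable def rcount (p : Polynomial ℂ) (P : ℂ → Prop) : ℕ :=
  Multiset.card (p.roots.filter P)

theorem pellet_scalar
    (n : ℕ) (hn : 2 ≤ n) (a : ℕ → ℂ) (p : Polynomial ℂ)
    (hp : p = X ^ n + ∑ i ∈ Finset.range n, C (a i) * X ^ i)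
    (k : ℕ) (hk1 : 1 ≤ k) (hk2 : k ≤ n - 1) (hak : a k ≠ 0)
    (f : ℝ → ℝ)
    (hf : ∀ x : ℝ, f x = x ^ n - ‖a k‖ * x ^ k
        + ∑ j ∈ (Finset.range n).erase k, ‖a j‖ * x ^ j)
    (x1 x2 : ℝ) (hx1 : 0 < x1) (hx12 : x1 < x2) (hfx1 : f x1 = 0) (hfx2 : f x2 = 0) :
    rcount p (fun z => ‖z‖ ≤ x1) = k ∧
    ∀ z : ℂ, p.eval z = 0 → ¬ (x1 < ‖z‖ ∧ ‖z‖ < x2) := by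
  classical
  have hkn : k < n := by omega
  -- the perturbation polynomial and the homotopy
  set s : Polynomial ℂ := ∑ j ∈ (Finset.range n).erase k, C (a j) * X ^ j with hs
  set q : ℝ → Polynomial ℂ := fun t => X ^ n + (C (a k) * X ^ k + C (t : ℂ) * s) with hq
  have hdeg_low : ∀ t : ℝ, (C (a k) * X ^ k + C (t : ℂ) * s).degree < (n : WithBot ℕ) := by
    intro t
    apply lt_of_le_of_lt (degree_add_le _ _)
    apply max_lt
    · exact lt_of_le_of_lt (degree_C_mul_X_pow_le _ _) (by exact_mod_cast hkn)
    · calc (C (t:ℂ) * s).degree ≤ (C (t:ℂ)).degree + s.degree := degree_mul_le _ _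
        _ ≤ 0 + s.degree := add_le_add degree_C_le le_rfl
        _ = s.degree := zero_add _
        _ < (n : WithBot ℕ) := degree_sum_lt' n _ _
            (fun j hj => Finset.mem_range.mp (Finset.mem_of_mem_erase hj))
  have hmono : ∀ t : ℝ, (q t).Monic := fun t => monic_X_pow_add (hdeg_low t)
  have hq1 : q 1 = p := by
    rw [hp, hq, hs]
    simp only [Complex.ofReal_one, map_one, one_mul]
    rw [← Finset.add_sum_erase _ (fun j => C (a j) * X ^ j) (Finset.mem_range.mpr hkn)]
  have heval : ∀ (t : ℝ) (z : ℂ), eval z (q t) = z ^ n + a k * z ^ k + t * eval z s := by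
    intro t z
    simp [hq]
    ring
  have hevals : ∀ z : ℂ, ‖eval z s‖
      ≤ ∑ j ∈ (Finset.range n).erase k, ‖a j‖ * ‖z‖ ^ j := by
    intro z
    rw [hs, eval_finset_sum]
    refine le_trans (norm_sum_le _ _) (le_of_eq (Finset.sum_congr rfl fun j _ => ?_))
    simp [map_mul, map_pow]
  -- Lemma A : f is negative on the open interval
  have hfneg : ∀ x : ℝ, x1 < x → x < x2 → f x < 0 := by
    set g : ℝ → ℝ := fun x => x ^ ((n : ℤ) - k) - ‖a k‖
        + ∑ j ∈ (Finset.range n).erase k, ‖a j‖ * x ^ ((j : ℤ) - k) with hg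
    have hgconv : ConvexOn ℝ (Set.Ioi (0:ℝ)) g := by
      refine ConvexOn.add (ConvexOn.sub (convexOn_zpow' _)
        (concaveOn_const _ (convex_Ioi _))) ?_
      refine convexOn_finset_sum _ _ fun j _ => ?_
      exact (convexOn_zpow' _).smul (norm_nonneg _)
    have hfg : ∀ x : ℝ, 0 < x → f x = x ^ k * g x := by
      intro x hx
      have hzp : ∀ m : ℕ, x ^ k * x ^ ((m : ℤ) - k) = x ^ m := by
        intro m
        rw [← zpow_natCast x k, ← zpow_add₀ hx.ne', ← zpow_natCast x m]
        congr 1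
        ring
      rw [hf, hg]
      rw [mul_add, mul_sub, hzp n, Finset.mul_sum]
      congr 1
      · ring
      · refine Finset.sum_congr rfl fun j _ => ?_
        rw [mul_left_comm, hzp j]
    have hgx1 : g x1 = 0 := by
      have h := hfg x1 hx1
      rw [hfx1] at h
      exact (mul_eq_zero.mp h.symm).resolve_left (pow_ne_zero _ hx1.ne')
    have hgx2 : g x2 = 0 := by
      have h := hfg x2 (lt_trans hx1 hx12)
      rw [hfx2] at h
      exact (mul_eq_zero.mp h.symm).resolve_left (pow_ne_zero _ (lt_trans hx1 hx12).ne')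
    have hkey : ∀ u v lam mu : ℝ, u ∈ Set.Ioi (0:ℝ) → v ∈ Set.Ioi (0:ℝ) → 0 ≤ lam → 0 ≤ mu →
        lam + mu = 1 → g (lam * u + mu * v) ≤ lam * g u + mu * g v := by
      intro u v lam mu hu hv ha hb hab
      simpa [smul_eq_mul] using hgconv.2 hu hv ha hb hab
    have hgle : ∀ x : ℝ, x1 ≤ x → x ≤ x2 → g x ≤ 0 := by
      intro x hax hbx
      have hd : (0:ℝ) < x2 - x1 := by linarith
      have hcomb := hkey x1 x2 ((x2 - x) / (x2 - x1)) ((x - x1) / (x2 - x1))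
        (Set.mem_Ioi.mpr hx1) (Set.mem_Ioi.mpr (lt_trans hx1 hx12))
        (div_nonneg (by linarith) hd.le) (div_nonneg (by linarith) hd.le)
        (by field_simp; ring)
      have hxeq : (x2 - x) / (x2 - x1) * x1 + (x - x1) / (x2 - x1) * x2 = x := by
        field_simp
        ring
      rw [hxeq, hgx1, hgx2] at hcomb
      simpa using hcomb
    intro x h1 h2
    have hx0 : (0:ℝ) < x := lt_trans hx1 h1
    have hfle : f x ≤ 0 := by
      rw [hfg x hx0]
      exact mul_nonpos_of_nonneg_of_nonpos (pow_nonneg hx0.le _) (hgle x h1.le h2.le)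
    rcases lt_or_eq_of_le hfle with h | h
    · exact h
    exfalso
    have hgx : g x = 0 := by
      have h' := hfg x hx0
      rw [h] at h'
      exact (mul_eq_zero.mp h'.symm).resolve_left (pow_ne_zero _ hx0.ne')
    have hfz : ∀ y : ℝ, y ∈ Set.Ioo x1 x → f y = 0 := by
      intro y hy
      have hy0 : (0:ℝ) < y := lt_trans hx1 hy.1
      have hle : g y ≤ 0 := hgle y hy.1.le (by linarith [hy.2])
      have hd : (0:ℝ) < x2 - y := by linarith [hy.2]
      have hcomb := hkey y x2 ((x2 - x) / (x2 - y)) ((x - y) / (x2 - y))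
        (Set.mem_Ioi.mpr hy0) (Set.mem_Ioi.mpr (lt_trans hx1 hx12))
        (div_nonneg (by linarith) hd.le) (div_nonneg (by linarith [hy.2]) hd.le)
        (by field_simp; ring)
      have hxeq : (x2 - x) / (x2 - y) * y + (x - y) / (x2 - y) * x2 = x := by
        field_simp
        ring
      rw [hxeq, hgx, hgx2] at hcomb
      have hlam : (0:ℝ) < (x2 - x) / (x2 - y) := div_pos (by linarith) hd
      have hge : 0 ≤ g y := by
        have h0 : 0 ≤ (x2 - x) / (x2 - y) * g y := by simpa using hcomb
        exact nonneg_of_mul_nonneg_right h0 hlam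
      rw [hfg y hy0, le_antisymm hle hge, mul_zero]
    set F : Polynomial ℝ := X ^ n + (-(C (‖a k‖) * X ^ k)
        + ∑ j ∈ (Finset.range n).erase k, C (‖a j‖) * X ^ j) with hF
    have hFmonic : F.Monic := by
      apply monic_X_pow_add
      apply lt_of_le_of_lt (degree_add_le _ _)
      apply max_lt
      · rw [degree_neg]
        exact lt_of_le_of_lt (degree_C_mul_X_pow_le _ _) (by exact_mod_cast hkn)
      · exact degree_sum_lt' n _ _ (fun j hj => Finset.mem_range.mp (Finset.mem_of_mem_erase hj))
    have hFeval : ∀ y : ℝ, eval y F = f y := by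
      intro y
      rw [hf, hF]
      simp [eval_finset_sum]
      ring
    have hinf : {y : ℝ | IsRoot F y}.Infinite := by
      apply Set.Infinite.mono _ (Set.Ioo_infinite h1)
      intro y hy
      simp only [Set.mem_setOf_eq, IsRoot, hFeval y, hfz y hy]
    exact hFmonic.ne_zero (eq_zero_of_infinite_isRoot F hinf)
  -- Lemma B : no zeros of `q t` in the annulus, for `t ∈ [0,1]`
  have hB : ∀ t : ℝ, 0 ≤ t → t ≤ 1 → ∀ z : ℂ, x1 < ‖z‖ → ‖z‖ < x2 →
      eval z (q t) ≠ 0 := by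
    intro t ht0 ht1 z h1 h2 h0
    have hzpos : (0:ℝ) < ‖z‖ := lt_trans hx1 h1
    have hak' : a k * z ^ k = -(z ^ n) - t * eval z s := by
      have := heval t z
      rw [h0] at this
      linear_combination -this
    have habs : ‖a k‖ * ‖z‖ ^ k
        ≤ ‖z‖ ^ n + ∑ j ∈ (Finset.range n).erase k,
            ‖a j‖ * ‖z‖ ^ j := by
      calc ‖a k‖ * ‖z‖ ^ k = ‖a k * z ^ k‖ := by
            simp [map_mul, map_pow]
        _ = ‖-(z ^ n) - t * eval z s‖ := by rw [hak']
        _ ≤ ‖-(z ^ n)‖ + ‖(t : ℂ) * eval z s‖ := by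
            exact norm_sub_le (-(z ^ n)) ((t : ℂ) * eval z s)
        _ ≤ ‖z‖ ^ n + 1 * ‖eval z s‖ := by
            rw [norm_neg, norm_pow, norm_mul, Complex.norm_of_nonneg ht0]
            gcongr
        _ ≤ ‖z‖ ^ n + ∑ j ∈ (Finset.range n).erase k,
              ‖a j‖ * ‖z‖ ^ j := by
            rw [one_mul]
            gcongr
            exact hevals z
    have := hfneg (‖z‖) h1 h2
    rw [hf] at this
    linarith
  -- part 2
  have part2 : ∀ z : ℂ, p.eval z = 0 → ¬ (x1 < ‖z‖ ∧ ‖z‖ < x2) := by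
    intro z hz ⟨h1, h2⟩
    exact hB 1 zero_le_one le_rfl z h1 h2 (by rwa [hq1])
  refine ⟨?_, part2⟩
  -- the radius
  set r : ℝ := (x1 + x2) / 2 with hrdef
  have hr1 : x1 < r := by rw [hrdef]; linarith
  have hr2 : r < x2 := by rw [hrdef]; linarith
  have hr0 : (0:ℝ) < r := lt_trans hx1 hr1
  have hsum_nonneg : (0:ℝ) ≤ ∑ j ∈ (Finset.range n).erase k,
      ‖a j‖ * r ^ j :=
    Finset.sum_nonneg fun j _ => mul_nonneg (norm_nonneg _) (pow_nonneg hr0.le _)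
  have hrk : r ^ (n - k) < ‖a k‖ := by
    have hfr := hfneg r hr1 hr2
    rw [hf] at hfr
    have h1 : r ^ n < ‖a k‖ * r ^ k := by linarith
    have h2 : r ^ n = r ^ (n - k) * r ^ k := by
      rw [← pow_add, Nat.sub_add_cancel hkn.le]
    rw [h2] at h1
    exact lt_of_mul_lt_mul_right h1 (pow_pos hr0 k).le
  -- no roots on the sphere
  have hsphere : ∀ t : ℝ, 0 ≤ t → t ≤ 1 → ∀ w ∈ (q t).roots, ‖w‖ ≠ r := by
    intro t ht0 ht1 w hw habs
    have hroot : eval w (q t) = 0 := by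
      exact (mem_roots (hmono t).ne_zero).mp hw
    exact hB t ht0 ht1 w (habs ▸ hr1) (habs ▸ hr2) hroot
  -- root count
  set N : ℝ → ℕ := fun t => Multiset.card ((q t).roots.filter (fun w => ‖w‖ < r))
    with hN
  -- the homotopy/continuity argument
  have hN01 : N 1 = N 0 := by
    set τ : ℝ → ℝ := fun t => max 0 (min 1 t) with hτ
    have hτ0 : ∀ t, 0 ≤ τ t := fun t => le_max_left _ _
    have hτ1 : ∀ t, τ t ≤ 1 := fun t => max_le zero_le_one (min_le_left _ _)
    have hτid : ∀ t ∈ Set.Icc (0:ℝ) 1, τ t = t := by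
      intro t ht
      simp only [hτ]
      rw [min_eq_right ht.2, max_eq_right ht.1]
    have hτcont : Continuous τ := continuous_const.max (continuous_const.min continuous_id)
    set G : ℝ → ℝ → ℂ := fun t θ =>
      (circleMap 0 r θ * Complex.I) *
        ((eval (circleMap 0 r θ) (derivative (X ^ n + C (a k) * X ^ k))
            + (τ t : ℂ) * eval (circleMap 0 r θ) (derivative s)) /
          (circleMap 0 r θ ^ n + a k * circleMap 0 r θ ^ k
            + (τ t : ℂ) * eval (circleMap 0 r θ) s)) with hG
    have habsc : ∀ θ : ℝ, ‖circleMap 0 r θ‖ = r := by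
      intro θ
      rw [norm_circleMap_zero r θ, abs_of_pos hr0]
    have hden_ne : ∀ (t θ : ℝ), circleMap 0 r θ ^ n + a k * circleMap 0 r θ ^ k
        + (τ t : ℂ) * eval (circleMap 0 r θ) s ≠ 0 := by
      intro t θ
      rw [← heval (τ t) (circleMap 0 r θ)]
      exact hB (τ t) (hτ0 t) (hτ1 t) _ (by rw [habsc θ]; exact hr1) (by rw [habsc θ]; exact hr2)
    have hder : ∀ (u : ℝ) (z : ℂ), eval z (derivative (q u))
        = eval z (derivative (X ^ n + C (a k) * X ^ k)) + (u:ℂ) * eval z (derivative s) := by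
      intro u z
      simp only [hq, derivative_add, derivative_C_mul, eval_add, eval_mul, eval_C]
      ring
    have hInt : ∀ t : ℝ, (∮ z in C(0, r), eval z (derivative (q (τ t))) / eval z (q (τ t)))
        = ∫ θ in (0:ℝ)..(2 * Real.pi), G t θ := by
      intro t
      rw [circleIntegral]
      refine intervalIntegral.integral_congr fun θ _ => ?_
      rw [deriv_circleMap, hG]
      simp only [smul_eq_mul]
      rw [hder (τ t), heval (τ t)]
    have hGcont : Continuous (Function.uncurry G) := by
      rw [hG]
      unfold Function.uncurry
      refine Continuous.mul ?_ ?_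
      · exact (((continuous_circleMap 0 r).comp continuous_snd).mul continuous_const)
      refine Continuous.div ?_ ?_ (fun p => hden_ne p.1 p.2)
      · refine Continuous.add ?_ (Continuous.mul ?_ ?_)
        · exact (Polynomial.continuous _).comp ((continuous_circleMap 0 r).comp continuous_snd)
        · exact Complex.continuous_ofReal.comp (hτcont.comp continuous_fst)
        · exact (Polynomial.continuous _).comp ((continuous_circleMap 0 r).comp continuous_snd)
      · refine Continuous.add (Continuous.add ?_ ?_) (Continuous.mul ?_ ?_)
        · exact (((continuous_circleMap 0 r).comp continuous_snd).pow n)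
        · exact continuous_const.mul (((continuous_circleMap 0 r).comp continuous_snd).pow k)
        · exact Complex.continuous_ofReal.comp (hτcont.comp continuous_fst)
        · exact (Polynomial.continuous _).comp ((continuous_circleMap 0 r).comp continuous_snd)
    have hA'cont : Continuous (fun t => ∫ θ in (0:ℝ)..(2 * Real.pi), G t θ) :=
      intervalIntegral.continuous_parametric_intervalIntegral_of_continuous' hGcont 0 (2 * Real.pi)
    have hval : ∀ t ∈ Set.Icc (0:ℝ) 1, (∫ θ in (0:ℝ)..(2 * Real.pi), G t θ)
        = (2 * Real.pi * Complex.I) * (N t : ℂ) := by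
      intro t ht
      rw [← hInt t, hτid t ht]
      exact argument_principle (q t) (hmono t) r hr0 (hsphere t ht.1 ht.2)
    have h2πi : (2 * (Real.pi : ℂ) * Complex.I) ≠ 0 := by
      simp [Real.pi_ne_zero, Complex.I_ne_zero, Complex.ofReal_ne_zero]
    set ψ : ℝ → ℝ := fun t => ((∫ θ in (0:ℝ)..(2 * Real.pi), G t θ)
        / (2 * Real.pi * Complex.I)).re with hψ
    have hψcont : Continuous ψ := Complex.continuous_re.comp (hA'cont.div_const _)
    have hψval : ∀ t ∈ Set.Icc (0:ℝ) 1, ψ t = (N t : ℝ) := by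
      intro t ht
      simp only [hψ]
      rw [hval t ht, mul_comm, mul_div_assoc, div_self h2πi, mul_one]
      simp
    have h0 : ψ 0 = (N 0 : ℝ) := hψval 0 ⟨le_refl 0, zero_le_one⟩
    have h1 : ψ 1 = (N 1 : ℝ) := hψval 1 ⟨zero_le_one, le_refl 1⟩
    rcases lt_trichotomy (N 1) (N 0) with hlt | heq | hgt
    · exfalso
      have hv : ((N 1 : ℝ) + 1/2) ∈ Set.Icc (ψ 1) (ψ 0) := by
        rw [h0, h1]
        have : (N 1 : ℝ) + 1 ≤ N 0 := by exact_mod_cast Nat.succ_le_of_lt hlt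
        constructor <;> linarith
      obtain ⟨t, ht, hψt⟩ := intermediate_value_Icc' zero_le_one hψcont.continuousOn hv
      have heq' : (N t : ℝ) = (N 1 : ℝ) + 1/2 := by rw [← hψval t ht]; exact hψt
      rcases le_or_gt (N t) (N 1) with h | h
      · have : (N t : ℝ) ≤ N 1 := Nat.cast_le.mpr h
        linarith
      · have : (N 1 : ℝ) + 1 ≤ N t := by exact_mod_cast Nat.succ_le_of_lt h
        linarith
    · exact heq
    · exfalso
      have hv : ((N 0 : ℝ) + 1/2) ∈ Set.Icc (ψ 0) (ψ 1) := by
        rw [h0, h1]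
        have : (N 0 : ℝ) + 1 ≤ N 1 := by exact_mod_cast Nat.succ_le_of_lt hgt
        constructor <;> linarith
      obtain ⟨t, ht, hψt⟩ := intermediate_value_Icc zero_le_one hψcont.continuousOn hv
      have heq' : (N t : ℝ) = (N 0 : ℝ) + 1/2 := by rw [← hψval t ht]; exact hψt
      rcases le_or_gt (N t) (N 0) with h | h
      · have : (N t : ℝ) ≤ N 0 := Nat.cast_le.mpr h
        linarith
      · have : (N 0 : ℝ) + 1 ≤ N t := by exact_mod_cast Nat.succ_le_of_lt h
        linarith
  -- count at t = 0
  have hN0 : N 0 = k := by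
    have hq0 : q 0 = X ^ k * (X ^ (n - k) + C (a k)) := by
      simp only [hq, Complex.ofReal_zero, map_zero, zero_mul, add_zero]
      rw [mul_add, ← pow_add, Nat.add_sub_cancel' hkn.le, mul_comm (X ^ k) (C (a k))]
    have hBmonic : (X ^ (n - k) + C (a k)).Monic := monic_X_pow_add_C (a k) (show n - k ≠ 0 by omega)
    have hroots0 : (q 0).roots
        = Multiset.replicate k (0:ℂ) + (X ^ (n - k) + C (a k)).roots := by
      rw [hq0, roots_mul (by rw [← hq0]; exact (hmono 0).ne_zero), roots_pow, roots_X,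
        Multiset.nsmul_singleton]
    simp only [hN]
    rw [hroots0, Multiset.filter_add, Multiset.card_add]
    have h1 : Multiset.filter (fun w => ‖w‖ < r) (Multiset.replicate k (0:ℂ))
        = Multiset.replicate k (0:ℂ) := by
      rw [Multiset.filter_eq_self]
      intro w hw
      rw [(Multiset.mem_replicate.mp hw).2]
      simpa using hr0
    have h2 : Multiset.filter (fun w => ‖w‖ < r) (X ^ (n - k) + C (a k)).roots
        = 0 := by
      rw [Multiset.filter_eq_nil]
      intro w hw hlt
      have hroot : w ^ (n - k) + a k = 0 := by
        have := (mem_roots hBmonic.ne_zero).mp hw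
        simpa [IsRoot] using this
      have habs : ‖w‖ ^ (n - k) = ‖a k‖ := by
        rw [← norm_pow, eq_neg_of_add_eq_zero_left hroot, norm_neg]
      have hpow : ‖w‖ ^ (n - k) < r ^ (n - k) :=
        pow_lt_pow_left₀ hlt (norm_nonneg w) (by omega)
      rw [habs] at hpow
      linarith
    rw [h1, h2, Multiset.card_replicate, Multiset.card_zero, add_zero]
  -- conclude
  have hfilter : p.roots.filter (fun z => ‖z‖ ≤ x1)
      = p.roots.filter (fun w => ‖w‖ < r) := by
    refine Multiset.filter_congr fun z hz => ?_
    have hz0 : p.eval z = 0 := by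
      exact (mem_roots (by rw [← hq1]; exact (hmono 1).ne_zero)).mp hz
    have hnot := part2 z hz0
    constructor
    · intro h; exact lt_of_le_of_lt h hr1
    · intro h
      by_contra hgt
      exact hnot ⟨lt_of_not_ge hgt, lt_trans h hr2⟩
  rw [rcount, hfilter]
  have : Multiset.card (p.roots.filter (fun w => ‖w‖ < r)) = N 1 := by
    simp only [hN, hq1]
  rw [this, hN01, hN0]
end

section
/- (Cauchy's theorem, matrix version, spectral norm.) Let P(z) = Iz^n + A_{n−1}z^{n−1} + … + A_1 z + A_0, where n ≥ 2, the A_j are m×m complex matrices not all zero, I is the m×m identity matrix, and ‖·‖ denotes the spectral norm (operator norm induced by the Euclidean norm). Then the real polynomial f(x) = x^n − ‖A_{n−1}‖ x^{n−1} − … − ‖A_1‖ x − ‖A_0‖ has a unique positive root s, and every eigenvalue of P, i.e., every z ∈ ℂ with det(P(z)) = 0, satisfies |z| ≤ s. -/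
set_option maxHeartbeats 1000000


open Polynomial

/-- The spectral norm (operator norm induced by the Euclidean norm) of a complex matrix. -/
noncomputable def specNorm {d : ℕ} (M : Matrix (Fin d) (Fin d) ℂ) : ℝ :=
  ‖Matrix.toEuclideanCLM (𝕜 := ℂ) M‖

/-- Key monotonicity lemma: if `t` is a positive root of `x^n - ∑ c_j x^j` with
nonnegative coefficients, one of which is positive, then for any `r > t` the value is
positive. -/
lemma cauchy_key (n : ℕ) (c : ℕ → ℝ) (hc : ∀ j, 0 ≤ c j) (k : ℕ) (hk : k < n)
    (hck : 0 < c k) (t r : ℝ) (ht : 0 < t) (htr : t < r)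
    (hft : t ^ n = ∑ j ∈ Finset.range n, c j * t ^ j) :
    ∑ j ∈ Finset.range n, c j * r ^ j < r ^ n := by
  have hr : 0 < r := ht.trans htr
  have hsum : 0 < ∑ j ∈ Finset.range n,
      c j * t ^ j * r ^ j * (r ^ (n - j) - t ^ (n - j)) := by
    apply Finset.sum_pos'
    · intro j hj
      have h1 : t ^ (n - j) ≤ r ^ (n - j) := pow_le_pow_left₀ ht.le htr.le _
      exact mul_nonneg (mul_nonneg (mul_nonneg (hc j) (pow_nonneg ht.le j)) (pow_nonneg hr.le j)) (sub_nonneg.mpr h1)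
    · refine ⟨k, Finset.mem_range.mpr hk, ?_⟩
      have h1 : t ^ (n - k) < r ^ (n - k) :=
        pow_lt_pow_left₀ htr ht.le (by omega)
      have h2 : 0 < c k * t ^ k * r ^ k := mul_pos (mul_pos hck (pow_pos ht k)) (pow_pos hr k)
      nlinarith
  have heq : ∑ j ∈ Finset.range n, c j * t ^ j * r ^ j * (r ^ (n - j) - t ^ (n - j))
      = r ^ n * (∑ j ∈ Finset.range n, c j * t ^ j)
        - t ^ n * (∑ j ∈ Finset.range n, c j * r ^ j) := by
    rw [Finset.mul_sum, Finset.mul_sum, ← Finset.sum_sub_distrib]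
    refine Finset.sum_congr rfl fun j hj => ?_
    have hjn : j ≤ n := (Finset.mem_range.mp hj).le
    have h1 : r ^ j * r ^ (n - j) = r ^ n := by rw [← pow_add]; congr 1; omega
    have h2 : t ^ j * t ^ (n - j) = t ^ n := by rw [← pow_add]; congr 1; omega
    rw [← h1, ← h2]; ring
  rw [heq, ← hft] at hsum
  have htn : 0 < t ^ n := pow_pos ht n
  nlinarith

theorem cauchy_matrix
    (d n : ℕ) (hn : 2 ≤ n) (A : ℕ → Matrix (Fin d) (Fin d) ℂ)
    (hA : ∃ j, j < n ∧ A j ≠ 0) :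
    ∃ s : ℝ, 0 < s ∧
      (s ^ n - ∑ j ∈ Finset.range n, specNorm (A j) * s ^ j = 0) ∧
      (∀ t : ℝ, 0 < t → t ^ n - ∑ j ∈ Finset.range n, specNorm (A j) * t ^ j = 0 → t = s) ∧
      (∀ z : ℂ, Matrix.det (z ^ n • (1 : Matrix (Fin d) (Fin d) ℂ)
          + ∑ j ∈ Finset.range n, z ^ j • A j) = 0 → ‖z‖ ≤ s) := by
  classical
  set c : ℕ → ℝ := fun j => specNorm (A j) with hc_def
  have hc : ∀ j, 0 ≤ c j := fun j => norm_nonneg _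
  obtain ⟨k, hk, hAk⟩ := hA
  have hck : 0 < c k := by
    rw [hc_def]
    simp only [specNorm]
    rw [norm_pos_iff]
    intro h
    apply hAk
    have := (Matrix.toEuclideanCLM (𝕜 := ℂ) (n := Fin d)).injective
    rw [← map_zero (Matrix.toEuclideanCLM (𝕜 := ℂ) (n := Fin d))] at h
    exact this h
  -- the function
  set f : ℝ → ℝ := fun t => t ^ n - ∑ j ∈ Finset.range n, c j * t ^ j with hf_def
  have hf_cont : Continuous f := by
    apply (continuous_pow n).sub
    exact continuous_finset_sum _ fun j _ => continuous_const.mul (continuous_pow j)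
  -- endpoints for IVT
  set C : ℝ := ∑ j ∈ Finset.range n, c j with hC_def
  have hC0 : 0 ≤ C := Finset.sum_nonneg fun j _ => hc j
  set R : ℝ := C + 1 with hR_def
  have hR1 : (1 : ℝ) ≤ R := by linarith
  have hR0 : 0 < R := by linarith
  have hfR : 0 ≤ f R := by
    have h1 : ∑ j ∈ Finset.range n, c j * R ^ j ≤ ∑ j ∈ Finset.range n, c j * R ^ (n - 1) := by
      refine Finset.sum_le_sum fun j hj => ?_
      have : R ^ j ≤ R ^ (n - 1) :=
        pow_le_pow_right₀ hR1 (by have := Finset.mem_range.mp hj; omega)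
      exact mul_le_mul_of_nonneg_left this (hc j)
    have h2 : ∑ j ∈ Finset.range n, c j * R ^ (n - 1) = C * R ^ (n - 1) := by
      rw [hC_def, Finset.sum_mul]
    have h3 : C * R ^ (n - 1) ≤ R * R ^ (n - 1) := by
      apply mul_le_mul_of_nonneg_right (by linarith) (pow_nonneg hR0.le _)
    have h4 : R * R ^ (n - 1) = R ^ n := by
      rw [← pow_succ']; congr 1; omega
    simp only [hf_def]
    nlinarith
  set t0 : ℝ := min 1 (c k) / 2 with ht0_def
  have ht00 : 0 < t0 := by
    have := lt_min one_pos hck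
    simp only [ht0_def]
    linarith
  have ht01 : t0 ≤ 1 := by
    have : min 1 (c k) ≤ 1 := min_le_left _ _
    simp only [ht0_def]; linarith
  have ht0ck : t0 < c k := by
    have h1 : min 1 (c k) ≤ c k := min_le_right _ _
    have h2 : 0 < min 1 (c k) := lt_min one_pos hck
    simp only [ht0_def]; linarith
  have hft0 : f t0 ≤ 0 := by
    have h1 : c k * t0 ^ k ≤ ∑ j ∈ Finset.range n, c j * t0 ^ j :=
      Finset.single_le_sum (f := fun j => c j * t0 ^ j)
        (fun j _ => mul_nonneg (hc j) (pow_nonneg ht00.le j)) (Finset.mem_range.mpr hk)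
    have h2 : t0 ^ n ≤ c k * t0 ^ k := by
      have h3 : t0 ^ n = t0 ^ k * t0 ^ (n - k) := by rw [← pow_add]; congr 1; omega
      have h4 : t0 ^ (n - k) ≤ t0 ^ 1 := pow_le_pow_of_le_one ht00.le ht01 (by omega)
      have h5 : t0 ^ k * t0 ^ (n - k) ≤ t0 ^ k * t0 := by
        have := pow_pos ht00 k
        nlinarith
      have h6 : t0 ^ k * t0 ≤ t0 ^ k * c k := by
        have := pow_pos ht00 k
        nlinarith
      nlinarith
    simp only [hf_def]
    linarith
  have ht0R : t0 ≤ R := le_trans ht01 hR1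
  -- IVT
  obtain ⟨s, hsIcc, hfs⟩ := intermediate_value_Icc ht0R hf_cont.continuousOn
    (Set.mem_Icc.mpr ⟨hft0, hfR⟩)
  have hs0 : 0 < s := lt_of_lt_of_le ht00 hsIcc.1
  have hs_root : s ^ n = ∑ j ∈ Finset.range n, c j * s ^ j := by
    have := hfs
    simp only [hf_def] at this
    linarith [sub_eq_zero.mp this]
  refine ⟨s, hs0, by simp only [hf_def] at hfs; exact hfs, ?_, ?_⟩
  · -- uniqueness
    intro t ht hft
    have ht_root : t ^ n = ∑ j ∈ Finset.range n, c j * t ^ j := by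
      linarith [sub_eq_zero.mp hft]
    rcases lt_trichotomy t s with h | h | h
    · exfalso
      have := cauchy_key n c hc k hk hck t s ht h ht_root
      linarith
    · exact h
    · exfalso
      have := cauchy_key n c hc k hk hck s t hs0 h hs_root
      linarith
  · -- eigenvalue bound
    intro z hz
    by_contra hcon
    push_neg at hcon
    set r : ℝ := ‖z‖ with hr_def
    have hr0 : 0 < r := hs0.trans hcon
    -- get eigenvector
    obtain ⟨v, hv0, hv⟩ := (Matrix.exists_mulVec_eq_zero_iff).mpr hz
    set E := (WithLp.linearEquiv 2 ℂ (Fin d → ℂ)).symm with hE_def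
    set w : EuclideanSpace ℂ (Fin d) := E v with hw_def
    have hw0 : w ≠ 0 := by
      simp only [hw_def]
      intro h
      exact hv0 (by simpa using E.injective (by simpa using h))
    have hwnorm : 0 < ‖w‖ := norm_pos_iff.mpr hw0
    set T := Matrix.toEuclideanCLM (𝕜 := ℂ) (n := Fin d) with hT_def
    -- translate mulVec equation
    have hTv : ∀ M : Matrix (Fin d) (Fin d) ℂ, T M w = E (M.mulVec v) := by
      intro M
      simp only [hw_def, hE_def]
      rfl
    have hkey : (z ^ n) • w = -(∑ j ∈ Finset.range n, (z ^ j) • (T (A j) w)) := by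
      have h1 : T (z ^ n • (1 : Matrix (Fin d) (Fin d) ℂ)
          + ∑ j ∈ Finset.range n, z ^ j • A j) w = 0 := by
        rw [hTv, hv, map_zero]
      rw [map_add, map_smul, map_one, map_sum] at h1
      simp only [map_smul, ContinuousLinearMap.add_apply, ContinuousLinearMap.smul_apply,
        ContinuousLinearMap.one_apply, ContinuousLinearMap.sum_apply] at h1
      linear_combination (norm := module) h1
    -- norms
    have hnorm : r ^ n * ‖w‖ ≤ (∑ j ∈ Finset.range n, c j * r ^ j) * ‖w‖ := by
      have h1 : ‖(z ^ n) • w‖ = r ^ n * ‖w‖ := by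
        rw [norm_smul, norm_pow, hr_def]
      have h2 : ‖∑ j ∈ Finset.range n, (z ^ j) • (T (A j) w)‖
          ≤ ∑ j ∈ Finset.range n, c j * r ^ j * ‖w‖ := by
        refine le_trans (norm_sum_le _ _) (Finset.sum_le_sum fun j _ => ?_)
        rw [norm_smul, norm_pow]
        have h3 : ‖T (A j) w‖ ≤ c j * ‖w‖ := (T (A j)).le_opNorm w
        calc ‖z‖ ^ j * ‖T (A j) w‖
            ≤ ‖z‖ ^ j * (c j * ‖w‖) := by
              apply mul_le_mul_of_nonneg_left h3 (by positivity)
          _ = c j * r ^ j * ‖w‖ := by rw [hr_def]; ring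
      rw [← h1, hkey, norm_neg]
      calc ‖∑ j ∈ Finset.range n, (z ^ j) • (T (A j) w)‖
          ≤ ∑ j ∈ Finset.range n, c j * r ^ j * ‖w‖ := h2
        _ = (∑ j ∈ Finset.range n, c j * r ^ j) * ‖w‖ := by rw [Finset.sum_mul]
    have hrn : r ^ n ≤ ∑ j ∈ Finset.range n, c j * r ^ j :=
      le_of_mul_le_mul_right hnorm hwnorm
    have := cauchy_key n c hc k hk hck s r hs0 hcon hs_root
    linarith
end
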